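/- arXiv:0802.1669 — 7 statements merged into one kernel-verified Lean document; each statement's English description precedes it below -/
import Mathlib

section
/- Let $a_i, b_i, c_i$ ($i=1,\dots,n$) be sequences of non-negative real numbers with $a_i = b_i + c_i$ and $a_i > 0$ for all $i$. Then for any positive integers $d$ and $n$, $\left(\frac{\sum_i a_i^{1+2/d}}{\sum_i a_i}\right)^{d/2} \le \left(\frac{\sum_i b_i^{1+2/d}}{\sum_i b_i}\right)^{d/2} + \left(\frac{\sum_i c_i^{1+2/d}}{\sum_i c_i}\right)^{d/2}$, where a term on the right is interpreted as $0$ if the corresponding denominator is $0$. -/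
open Finset

private lemma aux_conv (p : ℝ) (hp1 : 1 < p) (x y B C : ℝ) (hx : 0 ≤ x) (hy : 0 ≤ y)
    (hB : 0 < B) (hC : 0 < C) :
    (x + y) ^ p ≤ (B + C) ^ (p - 1) / B ^ (p - 1) * x ^ p
      + (B + C) ^ (p - 1) / C ^ (p - 1) * y ^ p := by
  set K := B + C with hKdef
  have hK : 0 < K := by positivity
  have hcv := (convexOn_rpow hp1.le).2
    (Set.mem_Ici.2 (show (0:ℝ) ≤ K / B * x by positivity))
    (Set.mem_Ici.2 (show (0:ℝ) ≤ K / C * y by positivity))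
    (show (0:ℝ) ≤ B / K by positivity) (show (0:ℝ) ≤ C / K by positivity)
    (show B / K + C / K = 1 by field_simp; exact hKdef.symm)
  have e1 : B / K * (K / B * x) = x := by
    rw [← mul_assoc, div_mul_div_comm, mul_comm B K, div_self (by positivity), one_mul]
  have e2 : C / K * (K / C * y) = y := by
    rw [← mul_assoc, div_mul_div_comm, mul_comm C K, div_self (by positivity), one_mul]
  have hcv2 : (x + y) ^ p ≤ B / K * (K / B * x) ^ p + C / K * (K / C * y) ^ p := by
    simpa only [smul_eq_mul, e1, e2] using hcv
  refine hcv2.trans (le_of_eq ?_)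
  have hBp : (0:ℝ) < B ^ p := Real.rpow_pos_of_pos hB p
  have hCp : (0:ℝ) < C ^ p := Real.rpow_pos_of_pos hC p
  rw [Real.mul_rpow (by positivity) hx, Real.mul_rpow (by positivity) hy,
    Real.div_rpow hK.le hB.le, Real.div_rpow hK.le hC.le,
    Real.rpow_sub hK, Real.rpow_sub hB, Real.rpow_sub hC, Real.rpow_one]
  field_simp
  simp only [Real.rpow_one, pow_one]; ring

theorem stmt_0 (n d : ℕ) (hn : 0 < n) (hd : 0 < d)
    (a b c : Fin n → ℝ)
    (hb : ∀ i, 0 ≤ b i) (hc : ∀ i, 0 ≤ c i)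
    (habc : ∀ i, a i = b i + c i) (ha : ∀ i, 0 < a i) :
    ((∑ i, a i ^ (1 + 2 / (d : ℝ))) / ∑ i, a i) ^ ((d : ℝ) / 2)
      ≤ ((∑ i, b i ^ (1 + 2 / (d : ℝ))) / ∑ i, b i) ^ ((d : ℝ) / 2)
        + ((∑ i, c i ^ (1 + 2 / (d : ℝ))) / ∑ i, c i) ^ ((d : ℝ) / 2) := by
  have hd0 : (0:ℝ) < d := by exact_mod_cast hd
  set p : ℝ := 1 + 2 / d with hpdef
  have hp1 : (1:ℝ) < p := by
    have : (0:ℝ) < 2 / d := by positivity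
    simp [hpdef]; linarith
  have hp0 : p ≠ 0 := by positivity
  have hkey : (p - 1) * ((d:ℝ)/2) = 1 := by
    rw [hpdef]; field_simp; ring
  -- case analysis on vanishing sums
  rcases eq_or_lt_of_le (Finset.sum_nonneg fun i _ => hb i) with hSb | hSb
  · -- ∑ b = 0, so b = 0 and a = c
    have hb0 : ∀ i, b i = 0 := by
      intro i
      have := (Finset.sum_eq_zero_iff_of_nonneg (fun i _ => hb i)).1 hSb.symm
      exact this i (Finset.mem_univ i)
    have hac : ∀ i, a i = c i := fun i => by rw [habc i, hb0 i, zero_add]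
    have h1 : (∑ i, b i ^ p) = 0 := by
      apply Finset.sum_eq_zero; intro i _; rw [hb0 i, Real.zero_rpow hp0]
    have h2 : (∑ i, a i ^ p) = ∑ i, c i ^ p := by
      apply Finset.sum_congr rfl; intro i _; rw [hac i]
    have h3 : (∑ i, a i) = ∑ i, c i := Finset.sum_congr rfl fun i _ => hac i
    rw [h1, h2, h3, ← hSb, zero_div, Real.zero_rpow (by positivity), zero_add]
  rcases eq_or_lt_of_le (Finset.sum_nonneg fun i _ => hc i) with hSc | hSc
  · have hc0 : ∀ i, c i = 0 := by
      intro i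
      have := (Finset.sum_eq_zero_iff_of_nonneg (fun i _ => hc i)).1 hSc.symm
      exact this i (Finset.mem_univ i)
    have hac : ∀ i, a i = b i := fun i => by rw [habc i, hc0 i, add_zero]
    have h1 : (∑ i, c i ^ p) = 0 := by
      apply Finset.sum_eq_zero; intro i _; rw [hc0 i, Real.zero_rpow hp0]
    have h2 : (∑ i, a i ^ p) = ∑ i, b i ^ p := by
      apply Finset.sum_congr rfl; intro i _; rw [hac i]
    have h3 : (∑ i, a i) = ∑ i, b i := Finset.sum_congr rfl fun i _ => hac i
    rw [h1, h2, h3, ← hSc, zero_div, Real.zero_rpow (by positivity), add_zero]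
  -- main case
  set Sb := ∑ i, b i with hSbdef
  set Sc := ∑ i, c i with hScdef
  set Nb := ∑ i, b i ^ p with hNbdef
  set Nc := ∑ i, c i ^ p with hNcdef
  have hSa : (∑ i, a i) = Sb + Sc := by
    rw [hSbdef, hScdef, ← Finset.sum_add_distrib]
    exact Finset.sum_congr rfl fun i _ => habc i
  have hNb : 0 < Nb := by
    obtain ⟨i, hi⟩ : ∃ i, 0 < b i := by
      by_contra h; push_neg at h
      have : Sb ≤ 0 := Finset.sum_nonpos fun i _ => h i
      linarith
    exact Finset.sum_pos' (fun j _ => Real.rpow_nonneg (hb j) p)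
      ⟨i, Finset.mem_univ i, Real.rpow_pos_of_pos hi p⟩
  have hNc : 0 < Nc := by
    obtain ⟨i, hi⟩ : ∃ i, 0 < c i := by
      by_contra h; push_neg at h
      have : Sc ≤ 0 := Finset.sum_nonpos fun i _ => h i
      linarith
    exact Finset.sum_pos' (fun j _ => Real.rpow_nonneg (hc j) p)
      ⟨i, Finset.mem_univ i, Real.rpow_pos_of_pos hi p⟩
  set B := (Nb / Sb) ^ ((d:ℝ)/2) with hBdef
  set C := (Nc / Sc) ^ ((d:ℝ)/2) with hCdef
  have hB : 0 < B := Real.rpow_pos_of_pos (div_pos hNb hSb) _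
  have hC : 0 < C := Real.rpow_pos_of_pos (div_pos hNc hSc) _
  set K := B + C with hKdef
  have hK : 0 < K := by positivity
  have hBp : B ^ (p - 1) = Nb / Sb := by
    rw [hBdef, ← Real.rpow_mul (by positivity), mul_comm ((d:ℝ)/2), hkey, Real.rpow_one]
  have hCp : C ^ (p - 1) = Nc / Sc := by
    rw [hCdef, ← Real.rpow_mul (by positivity), mul_comm ((d:ℝ)/2), hkey, Real.rpow_one]
  clear_value Sb Sc Nb Nc B C K
  -- pointwise convexity bound
  have hpt : ∀ i, a i ^ p ≤ K ^ (p-1) / B ^ (p-1) * b i ^ p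
      + K ^ (p-1) / C ^ (p-1) * c i ^ p := by
    intro i
    rw [habc i, hKdef]
    exact aux_conv p hp1 (b i) (c i) B C (hb i) (hc i) hB hC
  have hsum : (∑ i, a i ^ p) ≤ K ^ (p-1) * (Sb + Sc) := by
    calc (∑ i, a i ^ p) ≤ ∑ i, (K ^ (p-1) / B ^ (p-1) * b i ^ p
        + K ^ (p-1) / C ^ (p-1) * c i ^ p) := Finset.sum_le_sum fun i _ => hpt i
      _ = K ^ (p-1) / B ^ (p-1) * Nb + K ^ (p-1) / C ^ (p-1) * Nc := by
          rw [Finset.sum_add_distrib, ← Finset.mul_sum, ← Finset.mul_sum, ← hNbdef, ← hNcdef]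
      _ = K ^ (p-1) * (Sb + Sc) := by
          rw [hBp, hCp]; field_simp
  have hSa0 : (0:ℝ) < Sb + Sc := by linarith
  have hdiv : (∑ i, a i ^ p) / (∑ i, a i) ≤ K ^ (p-1) := by
    rw [hSa, div_le_iff₀ hSa0]; exact hsum
  calc ((∑ i, a i ^ p) / ∑ i, a i) ^ ((d:ℝ)/2)
      ≤ (K ^ (p-1)) ^ ((d:ℝ)/2) := by
        apply Real.rpow_le_rpow _ hdiv (by positivity)
        exact div_nonneg (Finset.sum_nonneg fun i _ => Real.rpow_nonneg (ha i).le p)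
          (Finset.sum_nonneg fun i _ => (ha i).le)
    _ = K := by rw [← Real.rpow_mul hK.le, hkey, Real.rpow_one]
end

section
/- The function $f(x_1,\dots,x_n) = \left(\frac{\sum_i x_i^{1+2/d}}{\sum_i x_i}\right)^{d/2}$ is convex on the set of non-negative vectors with strictly positive sum, for any positive integers $n$ and $d$. -/
open Finset

private lemma amgm2 {c T M : ℝ} (hc : 0 < c) (hT : 0 ≤ T) (hM : 0 ≤ M) :
    (c + 1) * (T ^ ((c + 1)⁻¹) * M ^ (c / (c + 1))) ≤ T + c * M := by
  have hc1 : (0:ℝ) < c + 1 := by linarith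
  have h := Real.geom_mean_le_arith_mean2_weighted
    (w₁ := (c + 1)⁻¹) (w₂ := c / (c + 1)) (p₁ := (c + 1) * T) (p₂ := (c + 1) * M)
    (by positivity) (by positivity) (by positivity) (by positivity)
    (by field_simp; ring)
  have e1 : ((c + 1) * T) ^ ((c + 1)⁻¹) = (c + 1) ^ ((c + 1)⁻¹) * T ^ ((c + 1)⁻¹) :=
    Real.mul_rpow hc1.le hT
  have e2 : ((c + 1) * M) ^ (c / (c + 1)) = (c + 1) ^ (c / (c + 1)) * M ^ (c / (c + 1)) :=
    Real.mul_rpow hc1.le hM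
  have e3 : (c + 1) ^ ((c + 1)⁻¹) * (c + 1) ^ (c / (c + 1)) = c + 1 := by
    rw [← Real.rpow_add hc1]
    rw [show (c + 1)⁻¹ + c / (c + 1) = 1 by field_simp; ring]
    exact Real.rpow_one _
  have e4 : (c + 1)⁻¹ * ((c + 1) * T) = T := by field_simp
  have e5 : c / (c + 1) * ((c + 1) * M) = c * M := by field_simp
  calc (c + 1) * (T ^ ((c + 1)⁻¹) * M ^ (c / (c + 1)))
      = ((c + 1) * T) ^ ((c + 1)⁻¹) * ((c + 1) * M) ^ (c / (c + 1)) := by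
        rw [e1, e2]; linear_combination (-(T ^ ((c + 1)⁻¹) * M ^ (c / (c + 1)))) * e3
    _ ≤ (c + 1)⁻¹ * ((c + 1) * T) + c / (c + 1) * ((c + 1) * M) := h
    _ = T + c * M := by rw [e4, e5]

private lemma calc_id {Ax Bx Az Bz c : ℝ} (hAx : 0 < Ax) (hBx : 0 < Bx)
    (hAz : 0 < Az) (hBz : 0 < Bz) (hc : 0 < c) :
    ((Ax / Bx) ^ c) ^ ((c + 1)⁻¹) * ((Az ^ c / Bz ^ (c + 1)) * Bx) ^ (c / (c + 1))
      = Az ^ (c - 1) * (Ax ^ (c / (c + 1)) * Az ^ ((c + 1)⁻¹)) / Bz ^ c := by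
  have hc1 : c + 1 ≠ 0 := by positivity
  obtain ⟨ax, rfl⟩ : ∃ u, Real.exp u = Ax := ⟨Real.log Ax, Real.exp_log hAx⟩
  obtain ⟨bx, rfl⟩ : ∃ u, Real.exp u = Bx := ⟨Real.log Bx, Real.exp_log hBx⟩
  obtain ⟨az, rfl⟩ : ∃ u, Real.exp u = Az := ⟨Real.log Az, Real.exp_log hAz⟩
  obtain ⟨bz, rfl⟩ : ∃ u, Real.exp u = Bz := ⟨Real.log Bz, Real.exp_log hBz⟩
  simp only [← Real.exp_sub, ← Real.exp_mul, ← Real.exp_add]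
  rw [Real.exp_eq_exp]
  field_simp
  ring

private lemma sumA_pos {n : ℕ} {x : Fin n → ℝ} (hx : ∀ i, 0 ≤ x i)
    (hBx : 0 < ∑ i, x i) (e : ℝ) : 0 < ∑ i, x i ^ e := by
  obtain ⟨i, hi⟩ : ∃ i, 0 < x i := by
    by_contra h
    push_neg at h
    have : ∑ i, x i ≤ 0 := Finset.sum_nonpos fun i _ => h i
    linarith
  refine Finset.sum_pos' (fun j _ => Real.rpow_nonneg (hx j) e) ⟨i, Finset.mem_univ i, ?_⟩
  exact Real.rpow_pos_of_pos hi e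

private lemma tangent {n : ℕ} {c : ℝ} (hc : 0 < c) (x z : Fin n → ℝ)
    (hx : ∀ i, 0 ≤ x i) (hz : ∀ i, 0 ≤ z i)
    (hBx : 0 < ∑ i, x i) (hBz : 0 < ∑ i, z i) :
    (c + 1) * (∑ i, z i ^ (1 + 1/c)) ^ (c - 1) / (∑ i, z i) ^ c * (∑ i, x i * z i ^ (1/c))
      - c * (∑ i, z i ^ (1 + 1/c)) ^ c / (∑ i, z i) ^ (c + 1) * (∑ i, x i)
    ≤ ((∑ i, x i ^ (1 + 1/c)) / (∑ i, x i)) ^ c := by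
  have hc1 : (0:ℝ) < c + 1 := by linarith
  set Ax := ∑ i, x i ^ (1 + 1/c) with hAxdef
  set Az := ∑ i, z i ^ (1 + 1/c) with hAzdef
  set Bx := ∑ i, x i with hBxdef
  set Bz := ∑ i, z i with hBzdef
  have hAx : 0 < Ax := sumA_pos hx hBx _
  have hAz : 0 < Az := sumA_pos hz hBz _
  -- Hölder
  have hpq : Real.HolderConjugate (1 + 1/c) (c + 1) := by
    rw [Real.holderConjugate_iff]
    constructor
    · have : 0 < 1/c := by positivity
      linarith
    · field_simp
  have holder : (∑ i, x i * z i ^ (1/c)) ≤ Ax ^ (c/(c+1)) * Az ^ ((c+1)⁻¹) := by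
    have h := Real.inner_le_Lp_mul_Lq (s := Finset.univ) x (fun i => z i ^ (1/c)) hpq
    have e1 : ∀ i, |x i| ^ (1 + 1/c) = x i ^ (1 + 1/c) := fun i => by
      rw [abs_of_nonneg (hx i)]
    have e2 : ∀ i : Fin n, |z i ^ (1/c)| ^ (c + 1) = z i ^ (1 + 1/c) := fun i => by
      rw [abs_of_nonneg (Real.rpow_nonneg (hz i) _), ← Real.rpow_mul (hz i),
        show (1/c) * (c + 1) = 1 + 1/c by field_simp]
    simp only [e1, e2] at h
    rw [show (1:ℝ) / (1 + 1/c) = c/(c+1) by field_simp, show (1:ℝ)/(c+1) = (c+1)⁻¹ by ring] at h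
    exact h
  set T := (Ax / Bx) ^ c with hTdef
  set M := Az ^ c / Bz ^ (c + 1) * Bx with hMdef
  have hT : 0 ≤ T := Real.rpow_nonneg (by positivity) _
  have hM : 0 ≤ M := by
    have := Real.rpow_nonneg hAz.le c
    have := Real.rpow_nonneg hBz.le (c+1)
    positivity
  have key : (c + 1) * Az ^ (c - 1) / Bz ^ c * (∑ i, x i * z i ^ (1/c))
      ≤ T + c * M := by
    have step1 : (c + 1) * Az ^ (c - 1) / Bz ^ c * (∑ i, x i * z i ^ (1/c))
        ≤ (c + 1) * Az ^ (c - 1) / Bz ^ c * (Ax ^ (c/(c+1)) * Az ^ ((c+1)⁻¹)) := by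
      apply mul_le_mul_of_nonneg_left holder
      have := Real.rpow_nonneg hAz.le (c-1)
      have := Real.rpow_pos_of_pos hBz c
      positivity
    have step2 : (c + 1) * Az ^ (c - 1) / Bz ^ c * (Ax ^ (c/(c+1)) * Az ^ ((c+1)⁻¹))
        = (c + 1) * (T ^ ((c + 1)⁻¹) * M ^ (c / (c + 1))) := by
      rw [hTdef, hMdef, calc_id hAx hBx hAz hBz hc]
      ring
    calc (c + 1) * Az ^ (c - 1) / Bz ^ c * (∑ i, x i * z i ^ (1/c))
        ≤ (c + 1) * Az ^ (c - 1) / Bz ^ c * (Ax ^ (c/(c+1)) * Az ^ ((c+1)⁻¹)) := step1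
      _ = (c + 1) * (T ^ ((c + 1)⁻¹) * M ^ (c / (c + 1))) := step2
      _ ≤ T + c * M := amgm2 hc hT hM
  have : c * Az ^ c / Bz ^ (c + 1) * Bx = c * M := by rw [hMdef]; ring
  linarith [key]


theorem stmt_1 (n d : ℕ) (hn : 0 < n) (hd : 0 < d) :
    ConvexOn ℝ {x : Fin n → ℝ | (∀ i, 0 ≤ x i) ∧ 0 < ∑ i, x i}
      (fun x : Fin n → ℝ =>
        ((∑ i, x i ^ (1 + 2 / (d : ℝ))) / ∑ i, x i) ^ ((d : ℝ) / 2)) := by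
  have hd' : (0:ℝ) < d := by exact_mod_cast hd
  set c : ℝ := (d : ℝ) / 2 with hcdef
  have hc : 0 < c := by positivity
  have hexp : (1 : ℝ) + 2 / (d : ℝ) = 1 + 1/c := by
    rw [hcdef]; field_simp
  rw [hexp]
  constructor
  · intro x hx y hy a b ha hb hab
    refine ⟨fun i => ?_, ?_⟩
    · have := hx.1 i; have := hy.1 i
      simp only [Pi.add_apply, Pi.smul_apply, smul_eq_mul]
      positivity
    · have hsum : ∑ i, (a • x + b • y) i = a * ∑ i, x i + b * ∑ i, y i := by
        simp only [Pi.add_apply, Pi.smul_apply, smul_eq_mul]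
        rw [Finset.sum_add_distrib, Finset.mul_sum, Finset.mul_sum]
      rw [hsum]
      rcases ha.lt_or_eq with h | h
      · nlinarith [hx.2, hy.2, mul_nonneg hb hy.2.le]
      · have hb1 : b = 1 := by linarith
        rw [← h, hb1]; simpa using hy.2
  · intro x hx y hy a b ha hb hab
    rcases ha.lt_or_eq with hapos | haz
    swap
    · have hb1 : b = 1 := by linarith
      simp [← haz, hb1]
    rcases hb.lt_or_eq with hbpos | hbz
    swap
    · have ha1 : a = 1 := by linarith
      simp [← hbz, ha1]
    set z : Fin n → ℝ := a • x + b • y with hzdef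
    have hzi : ∀ i, 0 ≤ z i := fun i => by
      have := hx.1 i; have := hy.1 i
      simp only [hzdef, Pi.add_apply, Pi.smul_apply, smul_eq_mul]
      positivity
    have hzsum : ∑ i, z i = a * ∑ i, x i + b * ∑ i, y i := by
      simp only [hzdef, Pi.add_apply, Pi.smul_apply, smul_eq_mul]
      rw [Finset.sum_add_distrib, Finset.mul_sum, Finset.mul_sum]
    have hBz : 0 < ∑ i, z i := by
      rw [hzsum]; nlinarith [hx.2, hy.2, mul_nonneg hb hy.2.le]
    have hAz : 0 < ∑ i, z i ^ (1 + 1/c) := sumA_pos hzi hBz _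
    have t1 := tangent hc x z hx.1 hzi hx.2 hBz
    have t2 := tangent hc y z hy.1 hzi hy.2 hBz
    -- combine
    set α := (c + 1) * (∑ i, z i ^ (1 + 1/c)) ^ (c - 1) / (∑ i, z i) ^ c with hαdef
    set β := c * (∑ i, z i ^ (1 + 1/c)) ^ c / (∑ i, z i) ^ (c + 1) with hβdef
    have hα : 0 ≤ α := by
      have := Real.rpow_nonneg hAz.le (c-1)
      have := Real.rpow_pos_of_pos hBz c
      rw [hαdef]; positivity
    have hSz : ∑ i, z i * z i ^ (1/c) = ∑ i, z i ^ (1 + 1/c) := by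
      refine Finset.sum_congr rfl fun i _ => ?_
      rw [Real.rpow_add' (hzi i) (by positivity), Real.rpow_one]
    have hSsum : a * (∑ i, x i * z i ^ (1/c)) + b * (∑ i, y i * z i ^ (1/c))
        = ∑ i, z i * z i ^ (1/c) := by
      rw [Finset.mul_sum, Finset.mul_sum, ← Finset.sum_add_distrib]
      refine Finset.sum_congr rfl fun i _ => ?_
      simp only [hzdef, Pi.add_apply, Pi.smul_apply, smul_eq_mul]
      ring
    have hfz : α * (∑ i, z i ^ (1 + 1/c)) - β * (∑ i, z i)
        = ((∑ i, z i ^ (1 + 1/c)) / ∑ i, z i) ^ c := by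
      rw [hαdef, hβdef, Real.div_rpow hAz.le hBz.le]
      have e1 : (∑ i, z i ^ (1 + 1/c)) ^ (c - 1) * (∑ i, z i ^ (1 + 1/c))
          = (∑ i, z i ^ (1 + 1/c)) ^ c := by
        nth_rewrite 2 [← Real.rpow_one (∑ i, z i ^ (1 + 1/c))]
        rw [← Real.rpow_add hAz]; ring_nf
      have e2 : (∑ i, z i) ^ (c + 1) = (∑ i, z i) ^ c * (∑ i, z i) := by
        rw [Real.rpow_add hBz, Real.rpow_one]
      have e3 : (c + 1) * (∑ i, z i ^ (1 + 1/c)) ^ (c - 1) / (∑ i, z i) ^ c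
          * (∑ i, z i ^ (1 + 1/c))
          = (c + 1) * (∑ i, z i ^ (1 + 1/c)) ^ c / (∑ i, z i) ^ c := by
        rw [div_mul_eq_mul_div, mul_assoc, e1]
      have e4 : c * (∑ i, z i ^ (1 + 1/c)) ^ c / (∑ i, z i) ^ (c + 1) * (∑ i, z i)
          = c * (∑ i, z i ^ (1 + 1/c)) ^ c / (∑ i, z i) ^ c := by
        rw [e2]
        field_simp
      rw [e3, e4]
      ring
    have comb : α * (∑ i, z i ^ (1 + 1/c)) - β * (∑ i, z i)
        ≤ a * (((∑ i, x i ^ (1 + 1/c)) / ∑ i, x i) ^ c)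
          + b * (((∑ i, y i ^ (1 + 1/c)) / ∑ i, y i) ^ c) := by
      have h1 : a * (α * (∑ i, x i * z i ^ (1/c)) - β * ∑ i, x i)
          ≤ a * (((∑ i, x i ^ (1 + 1/c)) / ∑ i, x i) ^ c) :=
        mul_le_mul_of_nonneg_left t1 ha
      have h2 : b * (α * (∑ i, y i * z i ^ (1/c)) - β * ∑ i, y i)
          ≤ b * (((∑ i, y i ^ (1 + 1/c)) / ∑ i, y i) ^ c) :=
        mul_le_mul_of_nonneg_left t2 hb
      have e : a * (α * (∑ i, x i * z i ^ (1/c)) - β * ∑ i, x i)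
          + b * (α * (∑ i, y i * z i ^ (1/c)) - β * ∑ i, y i)
          = α * (∑ i, z i * z i ^ (1/c)) - β * (a * ∑ i, x i + b * ∑ i, y i) := by
        rw [← hSsum]; ring
      rw [hSz, ← hzsum] at e
      linarith
    show ((∑ i, z i ^ (1 + 1/c)) / ∑ i, z i) ^ c ≤ _
    rw [← hfz]
    exact comb
end

section
/- Let $f$ be a probability density on $\mathbb{R}^d$ with finite second moments, bounded above by $M_f > 0$, with covariance matrix $\Sigma_f$. Then $|\Sigma_f|^{1/2} \ge \frac{\Gamma(d/2+1)}{M_f\, \{\pi(d+2)\}^{d/2}}$. -/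
open MeasureTheory Real Set Matrix

open scoped MatrixOrder in
noncomputable def Matrix.PosSemidef.sqrt {n : Type*} [Fintype n] [DecidableEq n]
    {A : Matrix n n ℝ} (_ : A.PosSemidef) : Matrix n n ℝ := CFC.sqrt A

open scoped MatrixOrder in
lemma Matrix.PosSemidef.posSemidef_sqrt {n : Type*} [Fintype n] [DecidableEq n]
    {A : Matrix n n ℝ} (hA : A.PosSemidef) : hA.sqrt.PosSemidef :=
  (CFC.sqrt_nonneg A).posSemidef

open scoped MatrixOrder in
lemma Matrix.PosSemidef.sqrt_mul_self {n : Type*} [Fintype n] [DecidableEq n]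
    {A : Matrix n n ℝ} (hA : A.PosSemidef) : hA.sqrt * hA.sqrt = A :=
  CFC.sqrt_mul_sqrt_self A hA.nonneg

lemma aux_bathtub {α : Type*} [MeasureSpace α] (g q : α → ℝ) (M t : ℝ) (E : Set α)
    (hE : MeasurableSet E) (hEfin : volume E ≠ ⊤)
    (hg0 : ∀ x, 0 ≤ g x) (hgM : ∀ x, g x ≤ M)
    (hgi : Integrable g) (hg1 : ∫ x, g x = 1)
    (hq0 : ∀ x, 0 ≤ q x) (hqm : Measurable q)
    (hqE : ∀ x ∈ E, q x ≤ t) (hqE' : ∀ x ∉ E, t ≤ q x)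
    (hqgi : Integrable (fun x => q x * g x))
    (hMt : M * (volume E).toReal = 1) :
    M * ∫ x in E, q x ≤ ∫ x, q x * g x := by
  have hqEi : IntegrableOn q E := by
    refine Measure.integrableOn_of_bounded (M := t) hEfin hqm.aestronglyMeasurable ?_
    filter_upwards [ae_restrict_mem hE] with x hx
    rw [Real.norm_eq_abs, abs_of_nonneg (hq0 x)]
    exact hqE x hx
  have I3 : Integrable (E.indicator q) := hqEi.integrable_indicator hE
  have I4 : Integrable (fun x => (M * t) * E.indicator (fun _ => (1:ℝ)) x) :=
    (((integrableOn_const hEfin).integrable_indicator hE).const_mul _)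
  have I2 : Integrable (fun x => t * g x) := hgi.const_mul t
  have I3' : Integrable (fun x => M * E.indicator q x) := I3.const_mul M
  have IA1 : Integrable (fun x => q x * g x - t * g x) := hqgi.sub I2
  have IA : Integrable (fun x => q x * g x - t * g x - M * E.indicator q x) := IA1.sub I3'
  have hnonneg : 0 ≤ ∫ x, (q x * g x - t * g x - M * E.indicator q x
      + (M * t) * E.indicator (fun _ => (1:ℝ)) x) := by
    refine integral_nonneg fun x => ?_
    simp only [Pi.zero_apply]
    have hpt : q x * g x - t * g x - M * E.indicator q x
        + (M * t) * E.indicator (fun _ => (1:ℝ)) x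
        = (q x - t) * (g x - M * E.indicator (fun _ => (1:ℝ)) x) := by
      by_cases hx : x ∈ E
      · simp only [Set.indicator_of_mem hx]; ring
      · simp only [Set.indicator_of_notMem hx]; ring
    rw [hpt]
    by_cases hx : x ∈ E
    · simp only [Set.indicator_of_mem hx, mul_one]
      nlinarith [mul_nonneg (sub_nonneg.2 (hqE x hx)) (sub_nonneg.2 (hgM x))]
    · simp only [Set.indicator_of_notMem hx, mul_zero, sub_zero]
      exact mul_nonneg (by linarith [hqE' x hx]) (hg0 x)
  rw [integral_add IA I4, integral_sub IA1 I3', integral_sub hqgi I2,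
    integral_const_mul, integral_const_mul, integral_const_mul, hg1,
    integral_indicator hE, integral_indicator hE] at hnonneg
  have hc : ∫ x in E, (1:ℝ) = (volume E).toReal := by
    rw [setIntegral_const, smul_eq_mul, mul_one, measureReal_def]
  rw [hc] at hnonneg
  have ht' : M * t * (volume E).toReal = t := by
    rw [mul_comm M t, mul_assoc, hMt, mul_one]
  linarith [hnonneg, ht']



lemma aux_ball_int (d : ℕ) (hd : 0 < d) (R : ℝ) (hR : 0 ≤ R) :
    ∫ z : EuclideanSpace ℝ (Fin d) in Metric.closedBall 0 R, ‖z‖^2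
      = ((d:ℝ)/((d:ℝ)+2)) * (Real.sqrt π ^ d / Real.Gamma ((d:ℝ)/2+1)) * R^(d+2) := by
  haveI : NeZero d := ⟨hd.ne'⟩
  have h1 : ∫ z : EuclideanSpace ℝ (Fin d) in Metric.closedBall 0 R, ‖z‖^2
      = ∫ x : EuclideanSpace ℝ (Fin d), (Set.indicator (Set.Iic R) (fun r => r^2) ‖x‖) := by
    rw [← integral_indicator measurableSet_closedBall]
    congr 1; ext x
    by_cases hx : ‖x‖ ≤ R
    · rw [Set.indicator_of_mem (by simpa [Metric.mem_closedBall, dist_zero_right] using hx),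
        Set.indicator_of_mem (by simpa using hx)]
    · rw [Set.indicator_of_notMem (by simpa [Metric.mem_closedBall, dist_zero_right] using hx),
        Set.indicator_of_notMem (by simpa using hx)]
  rw [h1, integral_fun_norm_addHaar volume (Set.indicator (Set.Iic R) (fun r => r^2))]
  have hrank : Module.finrank ℝ (EuclideanSpace ℝ (Fin d)) = d := by
    simp [finrank_euclideanSpace]
  rw [hrank]
  have h2 : ∫ y in Set.Ioi (0:ℝ), y ^ (d - 1) • (Set.indicator (Set.Iic R) (fun r => r^2) y)
      = R^(d+2) / (d+2) := by
    have : ∀ y : ℝ, y ^ (d - 1) • (Set.indicator (Set.Iic R) (fun r => r^2) y)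
        = Set.indicator (Set.Iic R) (fun y => y ^ (d+1)) y := by
      intro y
      by_cases hy : y ∈ Set.Iic R
      · rw [Set.indicator_of_mem hy, Set.indicator_of_mem hy, smul_eq_mul, ← pow_add]
        congr 1; omega
      · rw [Set.indicator_of_notMem hy, Set.indicator_of_notMem hy, smul_zero]
    simp_rw [this]
    rw [setIntegral_indicator measurableSet_Iic]
    have : Set.Ioi (0:ℝ) ∩ Set.Iic R = Set.Ioc 0 R := by ext y; simp [and_comm]
    rw [this, ← intervalIntegral.integral_of_le hR, integral_pow]
    push_cast
    ring
  rw [h2]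
  have hvol : (volume (Metric.ball (0:EuclideanSpace ℝ (Fin d)) 1)).toReal
      = Real.sqrt π ^ d / Real.Gamma ((d:ℝ)/2+1) := by
    rw [EuclideanSpace.volume_ball]
    simp only [Fintype.card_fin, ENNReal.ofReal_one, one_pow, one_mul]
    rw [ENNReal.toReal_ofReal (by positivity)]
  rw [measureReal_def, hvol, smul_eq_mul, nsmul_eq_mul]
  field_simp


set_option maxHeartbeats 2000000 in
lemma aux_centered (d : ℕ) (hd : 0 < d)
    (F : EuclideanSpace ℝ (Fin d) → ℝ) (M : ℝ) (hM : 0 < M)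
    (hFmeas : Measurable F) (hF0 : ∀ y, 0 ≤ F y) (hFM : ∀ y, F y ≤ M)
    (hFint : Integrable F) (hFone : ∫ y, F y = 1)
    (S : Matrix (Fin d) (Fin d) ℝ)
    (hI' : ∀ i j, Integrable (fun y => F y * y i * y j))
    (hS' : ∀ i j, S i j = ∫ y, F y * y i * y j) :
    Real.sqrt S.det ≥ Real.Gamma ((d : ℝ) / 2 + 1) /
      (M * (π * ((d : ℝ) + 2)) ^ ((d : ℝ) / 2)) := by
  haveI : NeZero d := ⟨hd.ne'⟩
  -- quadratic form integrals
  have hI2 : ∀ (C : Matrix (Fin d) (Fin d) ℝ) i j,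
      Integrable (fun y : EuclideanSpace ℝ (Fin d) => C i j * (F y * y i * y j)) :=
    fun C i j => (hI' i j).const_mul _
  have hQint : ∀ C : Matrix (Fin d) (Fin d) ℝ,
      Integrable (fun y : EuclideanSpace ℝ (Fin d) => ∑ i, ∑ j, C i j * (F y * y i * y j)) :=
    fun C => integrable_finset_sum _ fun i _ => integrable_finset_sum _ fun j _ => hI2 C i j
  have hQeq : ∀ C : Matrix (Fin d) (Fin d) ℝ,
      ∫ y : EuclideanSpace ℝ (Fin d), (∑ i, ∑ j, C i j * (F y * y i * y j))
        = ∑ i, ∑ j, C i j * S i j := by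
    intro C
    rw [integral_finset_sum _ fun i _ => integrable_finset_sum _ fun j _ => hI2 C i j]
    refine Finset.sum_congr rfl fun i _ => ?_
    rw [integral_finset_sum _ fun j _ => hI2 C i j]
    refine Finset.sum_congr rfl fun j _ => ?_
    rw [integral_const_mul, ← hS']
  -- symmetry
  have hsym : ∀ i j, S i j = S j i := by
    intro i j; rw [hS', hS']
    congr 1; funext y; ring
  have hSherm : S.IsHermitian := by
    refine Matrix.ext fun i j => ?_
    rw [Matrix.conjTranspose_apply, star_trivial, hsym j i]
  -- positive definiteness
  have hSpd : S.PosDef := by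
    refine Matrix.PosDef.of_dotProduct_mulVec_pos hSherm fun v hv => ?_
    have hvv : star v ⬝ᵥ S *ᵥ v = ∑ i, ∑ j, (v i * v j) * S i j := by
      simp only [dotProduct, Matrix.mulVec, Pi.star_apply, star_trivial,
        Finset.mul_sum]
      exact Finset.sum_congr rfl fun i _ => Finset.sum_congr rfl fun j _ => by ring
    have hkey : ∑ i, ∑ j, (v i * v j) * S i j
        = ∫ y : EuclideanSpace ℝ (Fin d), F y * (∑ i, v i * y i)^2 := by
      have hq := hQeq (Matrix.of fun i j => v i * v j)
      simp only [Matrix.of_apply] at hq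
      rw [← hq]
      refine integral_congr_ae (ae_of_all _ fun y => ?_)
      beta_reduce
      rw [pow_two, Finset.sum_mul_sum, Finset.mul_sum]
      refine Finset.sum_congr rfl fun i _ => ?_
      rw [Finset.mul_sum]
      exact Finset.sum_congr rfl fun j _ => by ring
    rw [hvv, hkey]
    have hIint : Integrable (fun y : EuclideanSpace ℝ (Fin d) => F y * (∑ i, v i * y i)^2) := by
      refine (hQint (Matrix.of fun i j => v i * v j)).congr (ae_of_all _ fun y => ?_)
      beta_reduce
      rw [pow_two, Finset.sum_mul_sum, Finset.mul_sum]
      refine Finset.sum_congr rfl fun i _ => ?_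
      rw [Finset.mul_sum]
      exact Finset.sum_congr rfl fun j _ => by simp only [Matrix.of_apply]; ring
    have hInn : 0 ≤ ∫ y : EuclideanSpace ℝ (Fin d), F y * (∑ i, v i * y i)^2 :=
      integral_nonneg fun y => mul_nonneg (hF0 y) (sq_nonneg _)
    rcases hInn.lt_or_eq with h | h
    · exact h
    exfalso
    have hae : (fun y : EuclideanSpace ℝ (Fin d) => F y * (∑ i, v i * y i)^2) =ᵐ[volume] 0 :=
      (integral_eq_zero_iff_of_nonneg
        (fun y => mul_nonneg (hF0 y) (sq_nonneg _)) hIint).mp h.symm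
    set w : EuclideanSpace ℝ (Fin d) := (WithLp.equiv 2 (Fin d → ℝ)).symm v with hw
    have hinner : ∀ y : EuclideanSpace ℝ (Fin d), inner ℝ w y = ∑ i, v i * y i := by
      intro y
      rw [PiLp.inner_apply]
      exact Finset.sum_congr rfl fun i _ => by
        simp only [RCLike.inner_apply, starRingEnd_apply, star_trivial]
        exact mul_comm _ _
    have hwne : w ≠ 0 := by
      intro h0
      apply hv
      have := congrArg (WithLp.equiv 2 (Fin d → ℝ)) h0
      simpa [hw] using this
    have hKne : LinearMap.ker (innerSL ℝ w : EuclideanSpace ℝ (Fin d) →ₗ[ℝ] ℝ) ≠ ⊤ := by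
      intro h0
      apply hwne
      have hmem : w ∈ LinearMap.ker (innerSL ℝ w : EuclideanSpace ℝ (Fin d) →ₗ[ℝ] ℝ) := h0.symm ▸ Submodule.mem_top
      have : inner ℝ w w = 0 := hmem
      exact inner_self_eq_zero.mp this
    have hK0 : volume ((LinearMap.ker (innerSL ℝ w : EuclideanSpace ℝ (Fin d) →ₗ[ℝ] ℝ) : Submodule ℝ (EuclideanSpace ℝ (Fin d)))
        : Set (EuclideanSpace ℝ (Fin d))) = 0 :=
      Measure.addHaar_submodule volume _ hKne
    have hae2 : ∀ᵐ y : EuclideanSpace ℝ (Fin d),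
        y ∉ ((LinearMap.ker (innerSL ℝ w : EuclideanSpace ℝ (Fin d) →ₗ[ℝ] ℝ) : Submodule ℝ (EuclideanSpace ℝ (Fin d)))
          : Set (EuclideanSpace ℝ (Fin d))) := measure_eq_zero_iff_ae_notMem.mp hK0
    have hFz : F =ᵐ[volume] 0 := by
      filter_upwards [hae, hae2] with y h1 h2
      have h1' : F y * (∑ i, v i * y i)^2 = 0 := h1
      rcases mul_eq_zero.mp h1' with h3 | h3
      · exact h3
      · exfalso
        apply h2
        have : inner ℝ w y = 0 := by rw [hinner]; exact pow_eq_zero_iff two_ne_zero |>.mp h3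
        exact this
    have : (1:ℝ) = 0 := by
      rw [← hFone, integral_congr_ae hFz]
      simp
    norm_num at this
  have hdetS : 0 < S.det := hSpd.det_pos
  have hApd : (S⁻¹).PosDef := hSpd.inv
  have hBps : Matrix.PosSemidef (hApd.posSemidef.sqrt) := hApd.posSemidef.posSemidef_sqrt
  have hBBA : hApd.posSemidef.sqrt * hApd.posSemidef.sqrt = S⁻¹ := hApd.posSemidef.sqrt_mul_self
  have hBt : ∀ i j, hApd.posSemidef.sqrt i j = hApd.posSemidef.sqrt j i := by
    intro i j
    conv_rhs => rw [← hBps.1]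
    rw [Matrix.conjTranspose_apply, star_trivial]
  have hdetA : (S⁻¹).det = S.det⁻¹ := by rw [Matrix.det_nonsing_inv, Ring.inverse_eq_inv]
  have hb2 : (hApd.posSemidef.sqrt).det ^ 2 = S.det⁻¹ := by
    rw [pow_two, ← Matrix.det_mul, hBBA, hdetA]
  have hb0 : 0 < (hApd.posSemidef.sqrt).det := by
    have hbn : 0 ≤ (hApd.posSemidef.sqrt).det := by
      rw [hBps.1.det_eq_prod_eigenvalues]
      exact Finset.prod_nonneg fun i _ => hBps.eigenvalues_nonneg i
    rcases hbn.eq_or_lt with h0 | h0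
    · exfalso
      rw [← h0] at hb2
      have h1 : (0:ℝ) < S.det⁻¹ := inv_pos.mpr hdetS
      nlinarith [hb2, h1]
    · exact h0
  have happ : ∀ (y : EuclideanSpace ℝ (Fin d)) i,
      (Matrix.toEuclideanLin hApd.posSemidef.sqrt y) i = ∑ j, hApd.posSemidef.sqrt i j * y j := by
    intro y i
    rw [Matrix.toEuclideanLin_apply]
    rfl
  have hnorm : ∀ y : EuclideanSpace ℝ (Fin d),
      ‖Matrix.toEuclideanLin hApd.posSemidef.sqrt y‖^2 = ∑ i, ∑ j, S⁻¹ i j * (y i * y j) := by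
    intro y
    have h1 : ‖Matrix.toEuclideanLin hApd.posSemidef.sqrt y‖^2
        = ∑ k, (∑ j, hApd.posSemidef.sqrt k j * y j)^2 := by
      rw [EuclideanSpace.norm_eq,
        Real.sq_sqrt (Finset.sum_nonneg fun k _ => sq_nonneg _)]
      refine Finset.sum_congr rfl fun k _ => ?_
      rw [Real.norm_eq_abs, sq_abs, happ]
    rw [h1]
    calc ∑ k, (∑ j, hApd.posSemidef.sqrt k j * y j)^2
        = ∑ k, ∑ i, ∑ j, (hApd.posSemidef.sqrt k i * y i) * (hApd.posSemidef.sqrt k j * y j) := by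
          refine Finset.sum_congr rfl fun k _ => ?_
          rw [pow_two, Finset.sum_mul_sum]
      _ = ∑ i, ∑ k, ∑ j, (hApd.posSemidef.sqrt k i * y i) * (hApd.posSemidef.sqrt k j * y j) :=
          Finset.sum_comm
      _ = ∑ i, ∑ j, ∑ k, (hApd.posSemidef.sqrt k i * y i) * (hApd.posSemidef.sqrt k j * y j) :=
          Finset.sum_congr rfl fun i _ => Finset.sum_comm
      _ = ∑ i, ∑ j, (∑ k, hApd.posSemidef.sqrt k i * hApd.posSemidef.sqrt k j) * (y i * y j) := by
          refine Finset.sum_congr rfl fun i _ => Finset.sum_congr rfl fun j _ => ?_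
          rw [Finset.sum_mul]
          exact Finset.sum_congr rfl fun k _ => by ring
      _ = ∑ i, ∑ j, S⁻¹ i j * (y i * y j) := by
          refine Finset.sum_congr rfl fun i _ => Finset.sum_congr rfl fun j _ => ?_
          congr 1
          have hBij := (Matrix.ext_iff.mpr hBBA) i j
          rw [Matrix.mul_apply] at hBij
          rw [← hBij]
          exact Finset.sum_congr rfl fun k _ => by rw [hBt k i]
  have htr : ∑ i, ∑ j, S⁻¹ i j * S i j = (d:ℝ) := by
    have hAS : S⁻¹ * S = 1 := Matrix.nonsing_inv_mul S (isUnit_iff_ne_zero.mpr hdetS.ne')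
    have h2 : ∑ i, ∑ j, S⁻¹ i j * S i j = Matrix.trace (S⁻¹ * S) := by
      rw [Matrix.trace]
      simp only [Matrix.diag_apply, Matrix.mul_apply]
      exact Finset.sum_congr rfl fun i _ => Finset.sum_congr rfl fun j _ => by rw [hsym i j]
    rw [h2, hAS, Matrix.trace_one]
    simp
  have hqF : ∫ y : EuclideanSpace ℝ (Fin d),
      ‖Matrix.toEuclideanLin hApd.posSemidef.sqrt y‖^2 * F y = (d:ℝ) := by
    rw [← htr, ← hQeq S⁻¹]
    refine integral_congr_ae (ae_of_all _ fun y => ?_)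
    beta_reduce
    rw [hnorm y, Finset.sum_mul]
    refine Finset.sum_congr rfl fun i _ => ?_
    rw [Finset.sum_mul]
    exact Finset.sum_congr rfl fun j _ => by ring
  have hqFint : Integrable (fun y : EuclideanSpace ℝ (Fin d) =>
      ‖Matrix.toEuclideanLin hApd.posSemidef.sqrt y‖^2 * F y) := by
    refine (hQint S⁻¹).congr (ae_of_all _ fun y => ?_)
    beta_reduce
    rw [hnorm y, Finset.sum_mul]
    refine (Finset.sum_congr rfl fun i _ => ?_).symm
    rw [Finset.sum_mul]
    exact Finset.sum_congr rfl fun j _ => by ring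
  -- geometry
  set b : ℝ := (hApd.posSemidef.sqrt).det with hbdef
  set ω : ℝ := Real.sqrt π ^ d / Real.Gamma ((d:ℝ)/2+1) with hωdef
  have hΓ : 0 < Real.Gamma ((d:ℝ)/2+1) := Real.Gamma_pos_of_pos (by positivity)
  have hωpos : 0 < ω :=
    div_pos (pow_pos (Real.sqrt_pos.mpr pi_pos) d) hΓ
  set R : ℝ := (b / (M * ω)) ^ ((d:ℝ)⁻¹) with hRdef
  have hRpos : 0 < R := Real.rpow_pos_of_pos (div_pos hb0 (mul_pos hM hωpos)) _
  have hRd : R ^ d = b / (M * ω) :=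
    Real.rpow_inv_natCast_pow (le_of_lt (div_pos hb0 (mul_pos hM hωpos))) hd.ne'
  clear_value R
  have hdetLb : LinearMap.det (Matrix.toEuclideanLin hApd.posSemidef.sqrt) = b := by
    rw [Matrix.toEuclideanLin_eq_toLin, LinearMap.det_toLin]
  set E : Set (EuclideanSpace ℝ (Fin d)) :=
    (Matrix.toEuclideanLin hApd.posSemidef.sqrt) ⁻¹' (Metric.closedBall 0 R) with hEdef
  have hLbcont : Continuous (Matrix.toEuclideanLin hApd.posSemidef.sqrt) :=
    LinearMap.continuous_of_finiteDimensional _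
  have hEmeas : MeasurableSet E := hLbcont.measurable measurableSet_closedBall
  have hvolB : volume (Metric.closedBall (0:EuclideanSpace ℝ (Fin d)) R)
      = ENNReal.ofReal (R^d * ω) := by
    rw [EuclideanSpace.volume_closedBall]
    simp only [Fintype.card_fin]
    rw [← ENNReal.ofReal_pow hRpos.le, ← ENNReal.ofReal_mul (by positivity)]
  have hvolE : volume E = ENNReal.ofReal (1 / M) := by
    rw [hEdef, Measure.addHaar_preimage_linearMap volume
      (by rw [hdetLb]; exact hb0.ne') , hvolB, hdetLb,
      ← ENNReal.ofReal_mul (by positivity)]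
    congr 1
    rw [abs_of_nonneg (inv_nonneg.2 hb0.le), hRd]
    field_simp
  have hEfin : volume E ≠ ⊤ := by rw [hvolE]; exact ENNReal.ofReal_ne_top
  have hMvol : M * (volume E).toReal = 1 := by
    rw [hvolE, ENNReal.toReal_ofReal (by positivity)]
    field_simp
  -- integral of q over E
  have hGmeas : Measurable (fun z : EuclideanSpace ℝ (Fin d) =>
      Set.indicator (Metric.closedBall (0:EuclideanSpace ℝ (Fin d)) R)
        (fun z => ‖z‖^2) z) :=
    Measurable.indicator (measurable_norm.pow_const 2) measurableSet_closedBall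
  have hmap : Measure.map (Matrix.toEuclideanLin hApd.posSemidef.sqrt) volume
      = ENNReal.ofReal |b⁻¹| • volume := by
    rw [Measure.map_linearMap_addHaar_eq_smul_addHaar volume
      (by rw [hdetLb]; exact hb0.ne'), hdetLb]
  have hEint : ∫ y in E, ‖Matrix.toEuclideanLin hApd.posSemidef.sqrt y‖^2
      = b⁻¹ * (((d:ℝ)/((d:ℝ)+2)) * ω * R^(d+2)) := by
    rw [← integral_indicator hEmeas]
    have h1 : ∀ y : EuclideanSpace ℝ (Fin d),
        E.indicator (fun y => ‖Matrix.toEuclideanLin hApd.posSemidef.sqrt y‖^2) y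
        = Set.indicator (Metric.closedBall 0 R) (fun z => ‖z‖^2)
            (Matrix.toEuclideanLin hApd.posSemidef.sqrt y) := by
      intro y
      by_cases hy : y ∈ E
      · rw [Set.indicator_of_mem hy, Set.indicator_of_mem (Set.mem_preimage.mp hy)]
      · rw [Set.indicator_of_notMem hy,
          Set.indicator_of_notMem (fun hc => hy (Set.mem_preimage.mpr hc))]
    rw [integral_congr_ae (ae_of_all _ h1),
      ← integral_map hLbcont.measurable.aemeasurable hGmeas.aestronglyMeasurable,
      hmap, integral_smul_measure, ENNReal.toReal_ofReal (abs_nonneg _),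
      integral_indicator measurableSet_closedBall, aux_ball_int d hd R hRpos.le,
      abs_of_nonneg (inv_nonneg.2 hb0.le), smul_eq_mul, ← hωdef]
  -- bathtub principle
  have hqmeas : Measurable (fun y : EuclideanSpace ℝ (Fin d) =>
      ‖Matrix.toEuclideanLin hApd.posSemidef.sqrt y‖^2) :=
    (hLbcont.norm.pow 2).measurable
  have hbath := aux_bathtub F
    (fun y : EuclideanSpace ℝ (Fin d) => ‖Matrix.toEuclideanLin hApd.posSemidef.sqrt y‖^2)
    M (R^2) E hEmeas hEfin hF0 hFM hFint hFone (fun y => sq_nonneg _) hqmeas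
    (fun y hy => by
      have : ‖Matrix.toEuclideanLin hApd.posSemidef.sqrt y‖ ≤ R :=
        mem_closedBall_zero_iff.mp (Set.mem_preimage.mp hy)
      exact pow_le_pow_left₀ (norm_nonneg _) this 2)
    (fun y hy => by
      have : R ≤ ‖Matrix.toEuclideanLin hApd.posSemidef.sqrt y‖ := by
        by_contra hc
        exact hy (Set.mem_preimage.mpr (mem_closedBall_zero_iff.mpr (le_of_not_ge hc)))
      exact pow_le_pow_left₀ hRpos.le this 2)
    hqFint hMvol
  rw [hEint, hqF] at hbath
  -- deduce R^2 ≤ d + 2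
  have hdpos : (0:ℝ) < d := Nat.cast_pos.mpr hd
  have hd2 : (0:ℝ) < (d:ℝ) + 2 := by positivity
  have hR2 : R^2 ≤ (d:ℝ) + 2 := by
    have hsimp : M * (b⁻¹ * ((d:ℝ)/((d:ℝ)+2) * ω * R^(d+2)))
        = (d:ℝ)/((d:ℝ)+2) * R^2 * (M * ω * b⁻¹ * R^d) := by
      rw [pow_add]; ring
    have hone : M * ω * b⁻¹ * R^d = 1 := by
      rw [hRd]; field_simp
    rw [hsimp, hone, mul_one, div_mul_eq_mul_div, div_le_iff₀ hd2] at hbath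
    nlinarith [hbath, hdpos]
  have hRd2 : R^d ≤ ((d:ℝ)+2) ^ ((d:ℝ)/2) := by
    have h1 : (R^2 : ℝ) ^ ((d:ℝ)/2) = R^d := by
      rw [← Real.rpow_natCast R 2, ← Real.rpow_mul hRpos.le,
        show ((2:ℕ):ℝ) * ((d:ℝ)/2) = (d:ℝ) by push_cast; ring]
      exact Real.rpow_natCast R d
    rw [← h1]
    exact Real.rpow_le_rpow (sq_nonneg R) hR2 (by positivity)
  have hbK : b ≤ M * ω * (((d:ℝ)+2) ^ ((d:ℝ)/2)) := by
    have hbeq : b = M * ω * R^d := by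
      rw [hRd]; field_simp
    rw [hbeq]
    exact mul_le_mul_of_nonneg_left hRd2 (by positivity)
  -- conclude
  have hsq : Real.sqrt S.det = b⁻¹ := by
    have h1 : S.det = (b⁻¹)^2 := by rw [inv_pow, hb2, inv_inv]
    rw [h1, Real.sqrt_sq (inv_nonneg.2 hb0.le)]
  rw [ge_iff_le, hsq]
  have hinv : (M * ω * (((d:ℝ)+2) ^ ((d:ℝ)/2)))⁻¹ ≤ b⁻¹ :=
    inv_anti₀ hb0 hbK
  refine le_trans (le_of_eq ?_) hinv
  have hdd : (0:ℝ) < ((d:ℝ)+2) ^ ((d:ℝ)/2) := Real.rpow_pos_of_pos hd2 _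
  have hsqpi : (0:ℝ) < Real.sqrt π ^ d := pow_pos (Real.sqrt_pos.2 pi_pos) d
  have hπ : (π * ((d:ℝ)+2)) ^ ((d:ℝ)/2)
      = (Real.sqrt π ^ d) * (((d:ℝ)+2) ^ ((d:ℝ)/2)) := by
    rw [Real.mul_rpow pi_pos.le hd2.le]
    congr 1
    rw [← Real.rpow_natCast (Real.sqrt π) d, Real.sqrt_eq_rpow,
      ← Real.rpow_mul pi_pos.le]
    congr 1
    push_cast; ring
  rw [hπ, hωdef]
  field_simp

theorem stmt_4 (d : ℕ) (hd : 0 < d) (f : (Fin d → ℝ) → ℝ) (M : ℝ) (hM : 0 < M)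
    (hf_meas : Measurable f) (hf_nonneg : ∀ x, 0 ≤ f x) (hf_le : ∀ x, f x ≤ M)
    (hf_int : Integrable f) (hf_prob : ∫ x, f x = 1)
    (μ : Fin d → ℝ)
    (hmean_int : ∀ i, Integrable (fun x : Fin d → ℝ => x i * f x))
    (hμ : ∀ i, μ i = ∫ x, x i * f x)
    (S : Matrix (Fin d) (Fin d) ℝ)
    (hcov_int : ∀ i j, Integrable (fun x : Fin d → ℝ => f x * (x i - μ i) * (x j - μ j)))
    (hS : ∀ i j, S i j = ∫ x, f x * (x i - μ i) * (x j - μ j)) :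
    Real.sqrt S.det ≥ Real.Gamma ((d : ℝ) / 2 + 1) / (M * (π * ((d : ℝ) + 2)) ^ ((d : ℝ) / 2)) := by
  haveI : NeZero d := ⟨hd.ne'⟩
  have key : ∀ h : (Fin d → ℝ) → ℝ,
      ∫ x, h x = ∫ y : EuclideanSpace ℝ (Fin d), h (fun i => y i + μ i) := by
    intro h
    rw [← (EuclideanSpace.volume_preserving_symm_measurableEquiv_toLp (Fin d)).integral_comp
      (MeasurableEquiv.measurableEmbedding _) h]
    have := integral_add_right_eq_self (μ := (volume : Measure (EuclideanSpace ℝ (Fin d))))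
      (fun y : EuclideanSpace ℝ (Fin d) => h (fun i => y i))
      ((WithLp.equiv 2 (Fin d → ℝ)).symm μ)
    exact this.symm
  have keyInt : ∀ h : (Fin d → ℝ) → ℝ, Integrable h →
      Integrable (fun y : EuclideanSpace ℝ (Fin d) => h (fun i => y i + μ i)) := by
    intro h hh
    have h1 : Integrable (fun y : EuclideanSpace ℝ (Fin d) => h (fun i => y i)) :=
      ((EuclideanSpace.volume_preserving_symm_measurableEquiv_toLp (Fin d)).integrable_comp_emb
        (MeasurableEquiv.measurableEmbedding _)).mpr hh
    exact h1.comp_add_right ((WithLp.equiv 2 (Fin d → ℝ)).symm μ)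
  refine aux_centered d hd (fun y => f (fun i => y i + μ i)) M hM ?_ ?_ ?_ ?_ ?_ S ?_ ?_
  · refine hf_meas.comp ?_
    refine measurable_pi_lambda _ fun i => ?_
    exact ((measurable_pi_apply i).comp
      (MeasurableEquiv.toLp 2 (Fin d → ℝ)).symm.measurable).add_const (μ i)
  · exact fun y => hf_nonneg _
  · exact fun y => hf_le _
  · exact keyInt f hf_int
  · exact (key f).symm.trans hf_prob
  · intro i j
    refine (keyInt _ (hcov_int i j)).congr (ae_of_all _ fun y => ?_)
    beta_reduce
    simp only [add_sub_cancel_right]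
  · intro i j
    rw [hS i j, key]
    refine integral_congr_ae (ae_of_all _ fun y => ?_)
    beta_reduce
    simp only [add_sub_cancel_right]
end

section
/- Let $f$ be a probability density on $\mathbb{R}$ with finite second moments bounded above by $M > 0$. Then its standard deviation satisfies $\sigma_f \ge \frac{1}{M\sqrt{12}}$, with equality if and only if $f$ equals a uniform density on an interval of length $1/M$ almost everywhere. -/
open MeasureTheory Real Set

lemma ind_mul_integral (M u v : ℝ) (huv : u ≤ v) (p : ℝ → ℝ) :
    ∫ x, (Ioo u v).indicator (fun _ => M) x * p x
      = M * ∫ x in u..v, p x := by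
  have h : (fun x => (Ioo u v).indicator (fun _ => M) x * p x)
      = (Ioo u v).indicator (fun x => M * p x) := by
    funext x; by_cases h : x ∈ Ioo u v <;> simp [Set.indicator_apply, h]
  rw [h, integral_indicator measurableSet_Ioo, ← integral_Ioc_eq_integral_Ioo,
    ← intervalIntegral.integral_of_le huv, intervalIntegral.integral_const_mul]

lemma ind_mul_integrable (M u v : ℝ) (p : ℝ → ℝ) (hp : Continuous p) :
    Integrable (fun x => (Ioo u v).indicator (fun _ => M) x * p x) := by
  have h : (fun x => (Ioo u v).indicator (fun _ => M) x * p x)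
      = (Ioo u v).indicator (fun x => M * p x) := by
    funext x; by_cases h : x ∈ Ioo u v <;> simp [Set.indicator_apply, h]
  rw [h, integrable_indicator_iff measurableSet_Ioo]
  exact ((continuous_const.mul hp).integrableOn_Icc).mono_set Ioo_subset_Icc_self

lemma ivl_integral (μ c : ℝ) : ∫ x in (μ-c)..(μ+c), ((x - μ)^2 - c^2) = -(4*c^3)/3 := by
  rw [intervalIntegral.integral_sub
      ((by continuity : Continuous fun x : ℝ => (x - μ)^2).intervalIntegrable _ _)
      intervalIntegrable_const]
  rw [intervalIntegral.integral_comp_sub_right (fun y => y^2) μ, integral_pow,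
    intervalIntegral.integral_const]
  push_cast
  simp only [smul_eq_mul]
  ring

lemma ivl_integral_sq (μ c : ℝ) : ∫ x in (μ-c)..(μ+c), (x - μ)^2 = 2*c^3/3 := by
  rw [intervalIntegral.integral_comp_sub_right (fun y => y^2) μ, integral_pow]
  push_cast; ring

lemma ivl_integral_id (u v : ℝ) : ∫ x in u..v, x = (v^2 - u^2)/2 := by
  rw [integral_id]

lemma sqrt_key (M : ℝ) (hM : 0 < M) : Real.sqrt (1/(12*M^2)) = 1/(M*Real.sqrt 12) := by
  have h12 : Real.sqrt 12 ^ 2 = 12 := Real.sq_sqrt (by norm_num)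
  have : (1/(12*M^2) : ℝ) = (1/(M*Real.sqrt 12))^2 := by
    rw [div_pow, one_pow, mul_pow, h12]; ring
  rw [this, Real.sqrt_sq (by positivity)]

set_option maxHeartbeats 1000000 in
theorem stmt_5 (f : ℝ → ℝ) (M : ℝ) (hM : 0 < M)
    (hf_meas : Measurable f) (hf_nonneg : ∀ x, 0 ≤ f x) (hf_le : ∀ x, f x ≤ M)
    (hf_int : Integrable f) (hf_prob : ∫ x, f x = 1)
    (hmom1 : Integrable (fun x => x * f x)) (hmom2 : Integrable (fun x => x ^ 2 * f x))
    (μf σf : ℝ) (hμ : μf = ∫ x, x * f x)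
    (hσ : σf = Real.sqrt (∫ x, (x - μf) ^ 2 * f x)) :
    σf ≥ 1 / (M * Real.sqrt 12) ∧
      (σf = 1 / (M * Real.sqrt 12) ↔
        ∃ a : ℝ, f =ᵐ[volume] (Ioo a (a + 1 / M)).indicator fun _ => M) := by
  set c : ℝ := 1/(2*M) with hc
  have hc0 : 0 < c := by positivity
  set V : ℝ := ∫ x, (x - μf) ^ 2 * f x with hV
  set g : ℝ → ℝ := (Ioo (μf - c) (μf + c)).indicator (fun _ => M) with hg
  have hMne : M ≠ 0 := ne_of_gt hM
  have h2c : μf - c + 1/M = μf + c := by rw [hc]; field_simp; ring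
  set φ : ℝ → ℝ := fun x => (f x - g x) * ((x - μf)^2 - c^2) with hφ
  -- pointwise nonnegativity
  have hφ_nonneg : ∀ x, 0 ≤ φ x := by
    intro x
    by_cases h : x ∈ Ioo (μf - c) (μf + c)
    · have hgx : g x = M := by simp [hg, Set.indicator_of_mem h]
      obtain ⟨h1, h2⟩ := h
      have : (x - μf)^2 ≤ c^2 := by nlinarith
      have hfM : f x - g x ≤ 0 := by rw [hgx]; linarith [hf_le x]
      simp only [hφ]
      nlinarith
    · have hgx : g x = 0 := by simp [hg, Set.indicator_of_notMem h]
      simp only [mem_Ioo, not_and_or, not_lt] at h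
      have : c^2 ≤ (x - μf)^2 := by rcases h with h | h <;> nlinarith
      simp only [hφ]
      rw [hgx, sub_zero]
      exact mul_nonneg (hf_nonneg x) (by linarith)
  -- integrability pieces
  have hI1 : Integrable (fun x => (x - μf)^2 * f x) := by
    have e : (fun x => (x - μf)^2 * f x)
        = fun x => x^2 * f x - (2*μf) * (x * f x) + μf^2 * f x := by funext x; ring
    rw [e]; exact (hmom2.sub (hmom1.const_mul _)).add (hf_int.const_mul _)
  have hcf : Integrable (fun x => c^2 * f x) := hf_int.const_mul _
  have hB : Integrable (fun x => g x * ((x - μf)^2 - c^2)) :=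
    ind_mul_integrable M _ _ _ (by continuity)
  have hA : Integrable (fun x => (x - μf)^2 * f x - c^2 * f x) := hI1.sub hcf
  have hφ_int : Integrable φ := by
    have e : φ = fun x => ((x - μf)^2 * f x - c^2 * f x) - (g x * ((x - μf)^2 - c^2)) := by
      funext x; simp only [hφ]; ring
    rw [e]; exact hA.sub hB
  -- value of ∫ φ
  have hBint : ∫ x, g x * ((x - μf)^2 - c^2) = -(1/(6*M^2)) := by
    rw [hg, ind_mul_integral M _ _ (by linarith), ivl_integral]
    rw [hc]; field_simp; ring
  have hAint : ∫ x, ((x - μf)^2 * f x - c^2 * f x) = V - c^2 := by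
    rw [integral_sub hI1 hcf, integral_const_mul, hf_prob, mul_one]
  have hφint_val : ∫ x, φ x = V - 1/(12*M^2) := by
    have e : φ = fun x => ((x - μf)^2 * f x - c^2 * f x) - (g x * ((x - μf)^2 - c^2)) := by
      funext x; simp only [hφ]; ring
    rw [e, integral_sub hA hB, hAint, hBint]
    rw [hc]; field_simp; ring
  have hVlb : 1/(12*M^2) ≤ V := by
    have : (0:ℝ) ≤ ∫ x, φ x := integral_nonneg hφ_nonneg
    rw [hφint_val] at this; linarith
  have hV0 : 0 ≤ V := le_trans (by positivity) hVlb
  have hk := sqrt_key M hM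
  constructor
  · rw [hσ, ← hk]
    exact Real.sqrt_le_sqrt hVlb
  constructor
  · -- equality → uniform
    intro heq
    have hVeq : V = 1/(12*M^2) := by
      have : Real.sqrt V = Real.sqrt (1/(12*M^2)) := by rw [← hσ, heq, hk]
      calc V = Real.sqrt V ^ 2 := (Real.sq_sqrt hV0).symm
        _ = Real.sqrt (1/(12*M^2)) ^ 2 := by rw [this]
        _ = 1/(12*M^2) := Real.sq_sqrt (by positivity)
    have hφ0 : ∫ x, φ x = 0 := by rw [hφint_val, hVeq]; ring
    have hφae : φ =ᵐ[volume] 0 :=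
      (integral_eq_zero_iff_of_nonneg hφ_nonneg hφ_int).mp hφ0
    have h1 : ∀ᵐ x : ℝ, x ≠ μf - c := by
      rw [ae_iff]; simp only [not_not]
      rw [show {x : ℝ | x = μf - c} = {μf - c} from Set.setOf_eq_eq_singleton]
      exact measure_singleton _
    have h2 : ∀ᵐ x : ℝ, x ≠ μf + c := by
      rw [ae_iff]; simp only [not_not]
      rw [show {x : ℝ | x = μf + c} = {μf + c} from Set.setOf_eq_eq_singleton]
      exact measure_singleton _
    refine ⟨μf - c, ?_⟩
    rw [h2c]
    filter_upwards [hφae, h1, h2] with x hx hx1 hx2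
    have hfac : (x - μf)^2 - c^2 ≠ 0 := by
      intro h0
      have : (x - (μf - c)) * (x - (μf + c)) = 0 := by nlinarith
      rcases mul_eq_zero.mp this with h | h
      · exact hx1 (by linarith)
      · exact hx2 (by linarith)
    have : (f x - g x) * ((x - μf)^2 - c^2) = 0 := hx
    have := (mul_eq_zero.mp this).resolve_right hfac
    have : f x = g x := by linarith
    exact this
  · -- uniform → equality
    rintro ⟨a, ha⟩
    obtain ⟨μ', hμ'⟩ : ∃ m : ℝ, m = a + c := ⟨_, rfl⟩
    have hab : μ' - c = a := by rw [hμ']; ring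
    have hab2 : μ' + c = a + 1/M := by rw [hμ', hc]; field_simp; ring
    have ha' : f =ᵐ[volume] (Ioo (μ' - c) (μ' + c)).indicator (fun _ => M) := by
      rw [hab, hab2]; exact ha
    set g' : ℝ → ℝ := (Ioo (μ' - c) (μ' + c)).indicator (fun _ => M) with hg'
    have hle' : μ' - c ≤ μ' + c := by linarith
    have hμeq : μf = μ' := by
      rw [hμ]
      have : ∫ x, x * f x = ∫ x, g' x * x := by
        apply integral_congr_ae
        filter_upwards [ha'] with x hx
        rw [hx, mul_comm]
      rw [this, ind_mul_integral M _ _ hle', ivl_integral_id, hc]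
      field_simp; ring
    have hVeq : V = 1/(12*M^2) := by
      rw [hV]
      have : ∫ x, (x - μf)^2 * f x = ∫ x, g' x * (x - μ')^2 := by
        apply integral_congr_ae
        filter_upwards [ha'] with x hx
        rw [hx, mul_comm, hμeq]
      rw [this, ind_mul_integral M _ _ hle', ivl_integral_sq, hc]
      field_simp; ring
    rw [hσ, hVeq, hk]
end

section
/- Every uniform density $u$ on a ball in $\mathbb{R}^d$ is $\mathcal{M}$-undecomposable: for any representation $u = \alpha_1 v_1 + \cdots + \alpha_m v_m$ as a mixture of probability densities with positive weights summing to 1, one has $|\Sigma_{v_1}|^{1/2} + \cdots + |\Sigma_{v_m}|^{1/2} \ge |\Sigma_u|^{1/2}$. -/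
set_option maxHeartbeats 1000000

open MeasureTheory Finset Matrix Metric


lemma det_toEuclideanLin {d : ℕ} (M : Matrix (Fin d) (Fin d) ℝ) :
    LinearMap.det (Matrix.toEuclideanLin M) = M.det := by
  have h : Matrix.toEuclideanLin M
      = ((WithLp.linearEquiv 2 ℝ (Fin d → ℝ)).symm.conj (Matrix.toLin' M)) := rfl
  rw [h, LinearEquiv.conj_apply, LinearMap.comp_assoc, LinearMap.det_conj, LinearMap.det_toLin']

lemma trace_eq_sum_eigenvalues {d : ℕ} {A : Matrix (Fin d) (Fin d) ℝ} (hA : A.IsHermitian) :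
    A.trace = ∑ i, hA.eigenvalues i := by
  simpa using hA.trace_eq_sum_eigenvalues

lemma det_le_pow_trace {d : ℕ} (hd : 0 < d) {A : Matrix (Fin d) (Fin d) ℝ}
    (hA : A.PosSemidef) : A.det ≤ (A.trace / d) ^ d := by
  have hH := hA.1
  have hev : ∀ i, 0 ≤ hH.eigenvalues i := hA.eigenvalues_nonneg
  have hdet : A.det = ∏ i, hH.eigenvalues i := by
    have := hH.det_eq_prod_eigenvalues
    simpa using this
  have htr : A.trace = ∑ i, hH.eigenvalues i := trace_eq_sum_eigenvalues hH
  have hgm := Real.geom_mean_le_arith_mean_weighted univ (fun _ => (d : ℝ)⁻¹)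
    hH.eigenvalues (fun _ _ => by positivity)
    (by simp [Finset.card_univ]; field_simp) (fun i _ => hev i)
  have hprod : ∏ i, hH.eigenvalues i ^ ((d : ℝ)⁻¹) = (∏ i, hH.eigenvalues i) ^ ((d : ℝ)⁻¹) := by
    rw [← Real.finset_prod_rpow _ _ (fun i _ => hev i)]
  rw [hprod] at hgm
  have hsum : ∑ i, (d : ℝ)⁻¹ * hH.eigenvalues i = A.trace / d := by
    rw [htr, ← Finset.mul_sum]; ring
  rw [hsum] at hgm
  have hdnn : (0:ℝ) ≤ ∏ i, hH.eigenvalues i := Finset.prod_nonneg fun i _ => hev i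
  calc A.det = ((∏ i, hH.eigenvalues i) ^ ((d : ℝ)⁻¹)) ^ d := by
        rw [Real.rpow_inv_natCast_pow hdnn hd.ne', hdet]
    _ ≤ (A.trace / d) ^ d := pow_le_pow_left₀ (Real.rpow_nonneg hdnn _) hgm d

lemma nontrivial_euclidean (d : ℕ) (hd : 0 < d) : Nontrivial (EuclideanSpace ℝ (Fin d)) := by
  refine ⟨0, EuclideanSpace.single ⟨0, hd⟩ 1, fun h => ?_⟩
  have := congrFun (congrArg (fun x : EuclideanSpace ℝ (Fin d) => (x : Fin d → ℝ)) h) ⟨0, hd⟩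
  simp [EuclideanSpace.single_apply] at this

lemma ball_moment (d : ℕ) (hd : 0 < d) (ρ : ℝ) (hρ : 0 < ρ) :
    ∫ x in Metric.ball (0 : EuclideanSpace ℝ (Fin d)) ρ, ‖x‖^2
      = (d : ℝ) / ((d:ℝ)+2) * ρ^(d+2)
        * (volume (Metric.ball (0:EuclideanSpace ℝ (Fin d)) 1)).toReal := by
  haveI := nontrivial_euclidean d hd
  set f : ℝ → ℝ := fun y => Set.indicator (Set.Iio ρ) (fun y => y^2) y with hf
  have h1 : ∫ x in Metric.ball (0:EuclideanSpace ℝ (Fin d)) ρ, ‖x‖^2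
      = ∫ x : EuclideanSpace ℝ (Fin d), f ‖x‖ := by
    rw [← integral_indicator measurableSet_ball]
    congr 1; ext x
    by_cases h : x ∈ Metric.ball (0:EuclideanSpace ℝ (Fin d)) ρ
    · rw [Set.indicator_of_mem h]
      rw [mem_ball_zero_iff] at h
      simp [hf, Set.indicator_of_mem, Set.mem_Iio.mpr h]
    · rw [Set.indicator_of_notMem h]
      rw [mem_ball_zero_iff] at h
      simp [hf, Set.indicator_of_notMem, h]
  rw [h1, MeasureTheory.integral_fun_norm_addHaar volume f]
  have hdim : Module.finrank ℝ (EuclideanSpace ℝ (Fin d)) = d := finrank_euclideanSpace_fin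
  rw [hdim]
  have h2 : ∫ y in Set.Ioi (0:ℝ), y ^ (d - 1) • f y = ρ^(d+2) / ((d:ℝ)+2) := by
    have heq : ∀ y : ℝ, y ^ (d - 1) • f y
        = Set.indicator (Set.Iio ρ) (fun y => y^(d-1) * y^2) y := by
      intro y
      by_cases h : y ∈ Set.Iio ρ
      · simp [hf, Set.indicator_of_mem h, smul_eq_mul]
      · simp [hf, Set.indicator_of_notMem h]
    rw [MeasureTheory.integral_congr_ae (Filter.Eventually.of_forall fun y => heq y)]
    rw [integral_indicator measurableSet_Iio, Measure.restrict_restrict measurableSet_Iio]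
    have : Set.Iio ρ ∩ Set.Ioi (0:ℝ) = Set.Ioo 0 ρ := by
      ext y; simp [Set.mem_Ioo, and_comm]
    rw [this]
    have h3 : ∀ y : ℝ, y^(d-1) * y^2 = y ^ (d+1) := by
      intro y; rw [← pow_add]; congr 1; omega
    simp_rw [h3]
    rw [← MeasureTheory.integral_Ioc_eq_integral_Ioo,
      ← intervalIntegral.integral_of_le hρ.le, integral_pow]
    push_cast; ring
  rw [h2]
  simp only [nsmul_eq_mul, smul_eq_mul]
  field_simp
  ring
  rfl


lemma hyperplane_null (d : ℕ) (a : Fin d → ℝ) (ha : a ≠ 0) (c : ℝ) :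
    volume {x : EuclideanSpace ℝ (Fin d) | (∑ i, a i * x i) = c} = 0 := by
  set L : EuclideanSpace ℝ (Fin d) →ₗ[ℝ] ℝ :=
    { toFun := fun x => ∑ i, a i * x i
      map_add' := by
        intro x y
        simp only [PiLp.add_apply, mul_add]
        rw [Finset.sum_add_distrib]
      map_smul' := by
        intro r x
        simp only [PiLp.smul_apply, smul_eq_mul, RingHom.id_apply, Finset.mul_sum]
        congr 1; ext i; ring } with hL
  obtain ⟨i, hai⟩ := Function.ne_iff.mp ha
  have hLe : L (EuclideanSpace.single i (1:ℝ)) = a i := by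
    simp [hL, EuclideanSpace.single_apply, mul_ite]
  have hK : LinearMap.ker L ≠ ⊤ := by
    intro h
    have : L (EuclideanSpace.single i (1:ℝ)) = 0 := by
      have : EuclideanSpace.single i (1:ℝ) ∈ LinearMap.ker L := h ▸ Submodule.mem_top
      simpa using this
    rw [hLe] at this
    exact hai (by simpa using this)
  set x₀ : EuclideanSpace ℝ (Fin d) := (c / a i) • EuclideanSpace.single i (1:ℝ) with hx₀
  have hLx₀ : L x₀ = c := by
    rw [hx₀, _root_.map_smul, hLe, smul_eq_mul]
    have : a i ≠ 0 := by simpa using hai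
    field_simp
  have hset : {x : EuclideanSpace ℝ (Fin d) | (∑ i, a i * x i) = c}
      = (fun x => x + (-x₀)) ⁻¹' ((LinearMap.ker L : Submodule ℝ (EuclideanSpace ℝ (Fin d))) : Set (EuclideanSpace ℝ (Fin d))) := by
    ext x
    simp only [Set.mem_setOf_eq, Set.mem_preimage, SetLike.mem_coe, LinearMap.mem_ker,
      map_add, map_neg, hLx₀]
    constructor
    · intro h
      have : L x = c := h
      rw [this]; ring
    · intro h
      have : L x = c := by linarith
      exact this
  rw [hset, measure_preimage_add_right]
  exact Measure.addHaar_submodule volume _ hK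

section
variable {d : ℕ} (f : EuclideanSpace ℝ (Fin d) → ℝ) (mm : Fin d → ℝ)
  (S : Matrix (Fin d) (Fin d) ℝ)

lemma quad_expand (a : Fin d → ℝ) (x : EuclideanSpace ℝ (Fin d)) :
    f x * (∑ i, a i * (x i - mm i))^2
      = ∑ i, ∑ k, (a i * a k) * (f x * (x i - mm i) * (x k - mm k)) := by
  rw [sq, Finset.sum_mul_sum, Finset.mul_sum]
  refine Finset.sum_congr rfl fun i _ => ?_
  rw [Finset.mul_sum]
  refine Finset.sum_congr rfl fun k _ => ?_
  ring

lemma quad_integrable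
    (hS_int : ∀ i k, Integrable (fun x : EuclideanSpace ℝ (Fin d) =>
      f x * (x i - mm i) * (x k - mm k)))
    (a : Fin d → ℝ) :
    Integrable (fun x : EuclideanSpace ℝ (Fin d) =>
      f x * (∑ i, a i * (x i - mm i))^2) := by
  have : (fun x : EuclideanSpace ℝ (Fin d) => f x * (∑ i, a i * (x i - mm i))^2)
      = fun x => ∑ i, ∑ k, (a i * a k) * (f x * (x i - mm i) * (x k - mm k)) := by
    funext x; exact quad_expand f mm a x
  rw [this]
  exact integrable_finset_sum _ fun i _ =>
    integrable_finset_sum _ fun k _ => (hS_int i k).const_mul _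

lemma cov_quad
    (hS_int : ∀ i k, Integrable (fun x : EuclideanSpace ℝ (Fin d) =>
      f x * (x i - mm i) * (x k - mm k)))
    (hS : ∀ i k, S i k = ∫ x, f x * (x i - mm i) * (x k - mm k))
    (a : Fin d → ℝ) :
    ∫ x, f x * (∑ i, a i * (x i - mm i))^2 = a ⬝ᵥ S *ᵥ a := by
  have h1 : ∫ x, f x * (∑ i, a i * (x i - mm i))^2
      = ∑ i, ∑ k, (a i * a k) * S i k := by
    simp_rw [quad_expand f mm a]
    rw [integral_finset_sum _ fun i _ =>
      integrable_finset_sum _ fun k _ => (hS_int i k).const_mul _]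
    refine Finset.sum_congr rfl fun i _ => ?_
    rw [integral_finset_sum _ fun k _ => (hS_int i k).const_mul _]
    refine Finset.sum_congr rfl fun k _ => ?_
    rw [MeasureTheory.integral_const_mul, hS]
  rw [h1]
  simp only [dotProduct, Matrix.mulVec, dotProduct]
  refine Finset.sum_congr rfl fun i _ => ?_
  rw [Finset.mul_sum]
  refine Finset.sum_congr rfl fun k _ => ?_
  ring

lemma cov_posDef (hd : 0 < d)
    (hnn : ∀ x, 0 ≤ f x) (hprob : ∫ x, f x = 1)
    (hS_int : ∀ i k, Integrable (fun x : EuclideanSpace ℝ (Fin d) =>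
      f x * (x i - mm i) * (x k - mm k)))
    (hS : ∀ i k, S i k = ∫ x, f x * (x i - mm i) * (x k - mm k)) :
    S.PosDef := by
  have hherm : S.IsHermitian := by
    show Sᴴ = S
    ext i k
    simp only [Matrix.conjTranspose_apply, star_trivial, hS]
    refine integral_congr_ae (Filter.Eventually.of_forall fun x => ?_)
    ring
  refine Matrix.PosDef.of_dotProduct_mulVec_pos hherm fun a ha => ?_
  have hsa : star a = a := by funext i; simp
  rw [hsa, ← cov_quad f mm S hS_int hS a]
  have hnn2 : ∀ x, 0 ≤ f x * (∑ i, a i * (x i - mm i))^2 :=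
    fun x => mul_nonneg (hnn x) (sq_nonneg _)
  rcases lt_or_eq_of_le (integral_nonneg (f := fun x => f x * (∑ i, a i * (x i - mm i))^2) hnn2) with h | h
  · exact h
  exfalso
  have hint2 := quad_integrable f mm hS_int a
  have hae : ∀ᵐ x : EuclideanSpace ℝ (Fin d),
      f x * (∑ i, a i * (x i - mm i))^2 = 0 := by
    have := (integral_eq_zero_iff_of_nonneg hnn2 hint2).mp h.symm
    filter_upwards [this] with x hx
    exact hx
  set c : ℝ := ∑ i, a i * mm i with hc
  have hnull : volume {x : EuclideanSpace ℝ (Fin d) | (∑ i, a i * x i) = c} = 0 :=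
    hyperplane_null d a ha c
  have hfe : f =ᵐ[volume] 0 := by
    have hcompl : ∀ᵐ x : EuclideanSpace ℝ (Fin d),
        x ∉ {x : EuclideanSpace ℝ (Fin d) | (∑ i, a i * x i) = c} := by
      rw [ae_iff]
      simpa using hnull
    filter_upwards [hae, hcompl] with x hx hxc
    rcases mul_eq_zero.mp hx with h0 | h0
    · exact h0
    · exfalso
      apply hxc
      have : ∑ i, a i * (x i - mm i) = 0 := by
        exact pow_eq_zero_iff (by norm_num) |>.mp h0
      have hexp : ∑ i, a i * (x i - mm i) = (∑ i, a i * x i) - c := by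
        rw [hc, ← Finset.sum_sub_distrib]
        refine Finset.sum_congr rfl fun i _ => ?_
        ring
      rw [hexp] at this
      have : (∑ i, a i * x i) = c := by linarith
      exact this
  rw [integral_congr_ae hfe] at hprob
  simp at hprob

end

lemma coord_continuous {d : ℕ} (i : Fin d) :
    Continuous (fun x : EuclideanSpace ℝ (Fin d) => x i) := by
  fun_prop

lemma indicator_mul_integrable {d : ℕ} (μ : EuclideanSpace ℝ (Fin d)) (r : ℝ) (c : ℝ)
    (q : EuclideanSpace ℝ (Fin d) → ℝ) (hq : Continuous q) :
    Integrable (fun x => (Metric.ball μ r).indicator (fun _ => c) x * q x) := by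
  have h : (fun x => (Metric.ball μ r).indicator (fun _ => c) x * q x)
      = (Metric.ball μ r).indicator (fun x => c * q x) := by
    funext x
    by_cases hx : x ∈ Metric.ball μ r
    · simp [Set.indicator_of_mem hx]
    · simp [Set.indicator_of_notMem hx]
  rw [h, integrable_indicator_iff measurableSet_ball]
  exact ((continuous_const.mul hq).continuousOn.integrableOn_compact
    (isCompact_closedBall μ r)).mono_set Metric.ball_subset_closedBall
lemma su_bound (d : ℕ) (hd : 0 < d) (μ : EuclideanSpace ℝ (Fin d)) (r : ℝ) (hr : 0 < r)
    (u : EuclideanSpace ℝ (Fin d) → ℝ)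
    (hu : u = (Metric.ball μ r).indicator fun _ => ((volume (Metric.ball μ r)).toReal)⁻¹)
    (Su : Matrix (Fin d) (Fin d) ℝ)
    (hSu : ∀ i k, Su i k = ∫ x, u x * (x i - μ i) * (x k - μ k)) :
    Real.sqrt Su.det ≤ Real.sqrt ((r^2/((d:ℝ)+2))^d) := by
  set volr := (volume (Metric.ball μ r)).toReal with hvolr
  have hvolr_pos : 0 < volr :=
    ENNReal.toReal_pos (measure_ball_pos volume μ hr).ne' measure_ball_lt_top.ne
  set volB1 := (volume (Metric.ball (0:EuclideanSpace ℝ (Fin d)) 1)).toReal with hvolB1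
  have hvolB1_pos : 0 < volB1 :=
    ENNReal.toReal_pos (measure_ball_pos volume _ one_pos).ne' measure_ball_lt_top.ne
  haveI := nontrivial_euclidean d hd
  have hvolr_eq : volr = r^d * volB1 := by
    rw [hvolr, hvolB1, Measure.addHaar_ball volume μ hr.le, ENNReal.toReal_mul,
      ENNReal.toReal_ofReal (by positivity), finrank_euclideanSpace_fin]
  have hSu_int : ∀ i k, Integrable (fun x : EuclideanSpace ℝ (Fin d) =>
      u x * (x i - μ i) * (x k - μ k)) := by
    intro i k
    rw [hu]
    have := indicator_mul_integrable μ r volr⁻¹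
      (fun x => (x i - μ i) * (x k - μ k))
      (((by fun_prop : Continuous fun x : EuclideanSpace ℝ (Fin d) => x i).sub
        continuous_const).mul
        (((by fun_prop : Continuous fun x : EuclideanSpace ℝ (Fin d) => x k)).sub
        continuous_const))
    simpa [mul_assoc] using this
  have hu_nonneg : ∀ x, 0 ≤ u x := by
    intro x; rw [hu]
    exact Set.indicator_nonneg (fun _ _ => by positivity) x
  have hu_prob : ∫ x, u x = 1 := by
    rw [hu, integral_indicator measurableSet_ball, setIntegral_const, smul_eq_mul,
      measureReal_def, ← hvolr, mul_inv_cancel₀ hvolr_pos.ne']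
  have hpd : Su.PosDef := cov_posDef u (fun i => μ i) Su hd hu_nonneg hu_prob hSu_int hSu
  -- trace computation
  have hshift : ∫ x, u x * ‖x - μ‖^2 = volr⁻¹ * ∫ y in Metric.ball (0:EuclideanSpace ℝ (Fin d)) r, ‖y‖^2 := by
    set F : EuclideanSpace ℝ (Fin d) → ℝ :=
      fun y => (Metric.ball (0:EuclideanSpace ℝ (Fin d)) r).indicator
        (fun y => volr⁻¹ * ‖y‖^2) y with hF
    have h1 : ∀ x, u x * ‖x - μ‖^2 = F (x - μ) := by
      intro x
      rw [hu, hF]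
      by_cases hx : x ∈ Metric.ball μ r
      · have hx' : x - μ ∈ Metric.ball (0:EuclideanSpace ℝ (Fin d)) r := by
          rw [mem_ball_zero_iff]
          rw [mem_ball_iff_norm] at hx
          exact hx
        simp [Set.indicator_of_mem hx, Set.indicator_of_mem hx']
      · have hx' : x - μ ∉ Metric.ball (0:EuclideanSpace ℝ (Fin d)) r := by
          rw [mem_ball_zero_iff]
          rw [mem_ball_iff_norm] at hx
          exact hx
        simp [Set.indicator_of_notMem hx, Set.indicator_of_notMem hx']
    simp_rw [h1]
    rw [integral_sub_right_eq_self F μ, hF, integral_indicator measurableSet_ball,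
      MeasureTheory.integral_const_mul]
  have htrace : Su.trace = (d:ℝ) * (r^2 / ((d:ℝ)+2)) := by
    have hsum : Su.trace = ∑ i, Su i i := rfl
    have hdecomp : ∀ x : EuclideanSpace ℝ (Fin d),
        ∑ i, u x * (x i - μ i) * (x i - μ i) = u x * ‖x - μ‖^2 := by
      intro x
      rw [PiLp.norm_sq_eq_of_L2, Finset.mul_sum]
      refine Finset.sum_congr rfl fun i _ => ?_
      rw [PiLp.sub_apply, Real.norm_eq_abs, sq_abs]
      ring
    rw [hsum]
    have : ∑ i, Su i i = ∫ x, u x * ‖x - μ‖^2 := by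
      simp_rw [hSu]
      rw [← integral_finset_sum _ fun i _ => hSu_int i i]
      exact integral_congr_ae (Filter.Eventually.of_forall fun x => hdecomp x)
    rw [this, hshift, ball_moment d hd r hr, ← hvolB1, hvolr_eq]
    have hrd : r^(d+2) = r^d * r^2 := by rw [pow_add]
    rw [hrd]
    field_simp
  have hdet : Su.det ≤ (r^2/((d:ℝ)+2))^d := by
    have := det_le_pow_trace hd hpd.posSemidef
    rwa [htrace, mul_div_cancel_left₀ _ (by positivity : (d:ℝ) ≠ 0)] at this
  exact Real.sqrt_le_sqrt hdet

lemma posDef_smul {d : ℕ} {B : Matrix (Fin d) (Fin d) ℝ} (hB : B.PosDef) {c : ℝ} (hc : 0 < c) :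
    (c • B).PosDef := by
  refine Matrix.PosDef.of_dotProduct_mulVec_pos ?_ ?_
  · show (c • B)ᴴ = c • B
    rw [conjTranspose_smul, hB.1]
    congr 1
  · intro x hx
    have h1 : star x ⬝ᵥ (c • B) *ᵥ x = c * (star x ⬝ᵥ B *ᵥ x) := by
      rw [smul_mulVec, dotProduct_smul, smul_eq_mul]
    rw [h1]
    exact mul_pos hc (hB.dotProduct_mulVec_pos hx)

lemma quad_eq_dot {d : ℕ} (A : Matrix (Fin d) (Fin d) ℝ) (y : Fin d → ℝ) :
    ∑ i, ∑ k, A i k * y i * y k = y ⬝ᵥ A *ᵥ y := by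
  simp only [dotProduct, Matrix.mulVec]
  refine Finset.sum_congr rfl fun i _ => ?_
  rw [Finset.mul_sum]
  refine Finset.sum_congr rfl fun k _ => ?_
  ring

open scoped MatrixOrder

lemma core (d : ℕ) (hd : 0 < d)
    (f : EuclideanSpace ℝ (Fin d) → ℝ) (hmeas : Measurable f)
    (hnn : ∀ x, 0 ≤ f x) (hint : Integrable f) (hprob : ∫ x, f x = 1)
    (M ρ : ℝ) (hM : 0 < M) (hρ : 0 < ρ)
    (hfM : ∀ x, f x ≤ M)
    (hMρ : M * (volume (Metric.ball (0:EuclideanSpace ℝ (Fin d)) ρ)).toReal = 1)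
    (mm : Fin d → ℝ) (S : Matrix (Fin d) (Fin d) ℝ)
    (hS_int : ∀ i k, Integrable fun x : EuclideanSpace ℝ (Fin d) =>
      f x * (x i - mm i) * (x k - mm k))
    (hS : ∀ i k, S i k = ∫ x, f x * (x i - mm i) * (x k - mm k)) :
    Real.sqrt ((ρ^2/((d:ℝ)+2))^d) ≤ Real.sqrt S.det := by
  haveI := nontrivial_euclidean d hd
  have hpd : S.PosDef := cov_posDef f mm S hd hnn hprob hS_int hS
  have hdetpos : (0:ℝ) < S.det := hpd.det_pos
  set c : ℝ := S.det ^ ((d:ℝ)⁻¹) with hc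
  have hcpos : 0 < c := Real.rpow_pos_of_pos hdetpos _
  set A : Matrix (Fin d) (Fin d) ℝ := c • S⁻¹ with hA
  have hSinv_pd : S⁻¹.PosDef := hpd.inv
  have hA_pd : A.PosDef := posDef_smul hSinv_pd hcpos
  have hcd : c ^ d = S.det := Real.rpow_inv_natCast_pow hdetpos.le hd.ne' 
  have hA_det : A.det = 1 := by
    rw [hA, Matrix.det_smul, Matrix.det_nonsing_inv, Fintype.card_fin, hcd]
    field_simp
    exact Ring.mul_inverse_cancel _ (isUnit_iff_ne_zero.mpr hdetpos.ne')
  -- trace identity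
  have hSunit : IsUnit S.det := isUnit_iff_ne_zero.mpr hdetpos.ne'
  have htrAS : ∑ i, ∑ k, A i k * S i k = (d:ℝ) * c := by
    have hsymm : ∀ i k, S k i = S i k := by
      intro i k
      conv_lhs => rw [← hpd.1]
      simp [Matrix.conjTranspose_apply]
    have h1 : ∑ i, ∑ k, A i k * S i k = (A * S).trace := by
      rw [Matrix.trace]
      refine Finset.sum_congr rfl fun i _ => ?_
      rw [Matrix.diag_apply, Matrix.mul_apply]
      refine Finset.sum_congr rfl fun k _ => ?_
      rw [hsymm]
    have h2 : A * S = c • (1 : Matrix (Fin d) (Fin d) ℝ) := by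
      rw [hA, Matrix.smul_mul, Matrix.nonsing_inv_mul S hSunit]
    rw [h1, h2, Matrix.trace_smul, Matrix.trace_one, smul_eq_mul, Fintype.card_fin]
    ring
  -- the quadratic function
  set g : EuclideanSpace ℝ (Fin d) → ℝ :=
    fun x => ∑ i, ∑ k, A i k * (x i - mm i) * (x k - mm k) with hg
  have hg_cont : Continuous g := by
    refine continuous_finset_sum _ fun i _ => continuous_finset_sum _ fun k _ => ?_
    have h1 : Continuous (fun x : EuclideanSpace ℝ (Fin d) => x i) := by fun_prop
    have h2 : Continuous (fun x : EuclideanSpace ℝ (Fin d) => x k) := by fun_prop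
    exact (continuous_const.mul (h1.sub continuous_const)).mul (h2.sub continuous_const)
  have hg_quad : ∀ x : EuclideanSpace ℝ (Fin d),
      g x = (fun i => x i - mm i) ⬝ᵥ A *ᵥ (fun i => x i - mm i) := by
    intro x; rw [hg]; exact quad_eq_dot A _
  have hg_nonneg : ∀ x, 0 ≤ g x := by
    intro x
    rw [hg_quad]
    have := hA_pd.posSemidef.dotProduct_mulVec_nonneg (fun i => x i - mm i)
    simpa using this
  -- integral of f * g
  have hfg_eq : ∀ x, f x * g x
      = ∑ i, ∑ k, A i k * (f x * (x i - mm i) * (x k - mm k)) := by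
    intro x
    rw [hg, Finset.mul_sum]
    refine Finset.sum_congr rfl fun i _ => ?_
    rw [Finset.mul_sum]
    refine Finset.sum_congr rfl fun k _ => ?_
    ring
  have hfg_int : Integrable (fun x => f x * g x) := by
    have : (fun x => f x * g x)
        = fun x => ∑ i, ∑ k, A i k * (f x * (x i - mm i) * (x k - mm k)) := funext hfg_eq
    rw [this]
    exact integrable_finset_sum _ fun i _ =>
      integrable_finset_sum _ fun k _ => (hS_int i k).const_mul _
  have hfg_integral : ∫ x, f x * g x = (d:ℝ) * c := by
    rw [← htrAS]
    simp_rw [hfg_eq]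
    rw [integral_finset_sum _ fun i _ =>
      integrable_finset_sum _ fun k _ => (hS_int i k).const_mul (A i k)]
    refine Finset.sum_congr rfl fun i _ => ?_
    rw [integral_finset_sum _ fun k _ => (hS_int i k).const_mul (A i k)]
    refine Finset.sum_congr rfl fun k _ => ?_
    rw [MeasureTheory.integral_const_mul, hS]
  -- square root matrix
  set R : Matrix (Fin d) (Fin d) ℝ := CFC.sqrt A with hR
  have hR_psd : R.PosSemidef := (CFC.sqrt_nonneg A).posSemidef
  have hRR : R * R = A := CFC.sqrt_mul_sqrt_self A hA_pd.posSemidef.nonneg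
  have hRdet : R.det = 1 := by
    have h1 : R.det * R.det = 1 := by
      have := congrArg Matrix.det hRR
      rwa [Matrix.det_mul, hA_det] at this
    rcases mul_self_eq_one_iff.mp h1 with h | h
    · exact h
    · exfalso
      have hnn' : (0:ℝ) ≤ R.det := by
        rw [hR_psd.1.det_eq_prod_eigenvalues]
        refine Finset.prod_nonneg fun i _ => ?_
        simpa using hR_psd.eigenvalues_nonneg i
      rw [h] at hnn'
      norm_num at hnn'
  have hRunit : IsUnit R.det := by rw [hRdet]; exact isUnit_one
  set W : Matrix (Fin d) (Fin d) ℝ := R⁻¹ with hW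
  have hWdet : W.det = 1 := by rw [hW, Matrix.det_nonsing_inv, hRdet]; norm_num
  have hW_herm : W.IsHermitian := hR_psd.1.inv
  have hWT : Wᵀ = W := by
    ext i j
    rw [Matrix.transpose_apply]
    conv_rhs => rw [← hW_herm]
    simp [Matrix.conjTranspose_apply]
  have hWAW : W * (A * W) = 1 := by
    rw [← hRR, hW]
    rw [show R * R * R⁻¹ = R * (R * R⁻¹) from Matrix.mul_assoc R R R⁻¹,
      Matrix.mul_nonsing_inv R hRunit, Matrix.mul_one, Matrix.nonsing_inv_mul R hRunit]
  -- the affine map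
  set m' : EuclideanSpace ℝ (Fin d) := (WithLp.equiv 2 (Fin d → ℝ)).symm mm with hm'
  set L := Matrix.toEuclideanLin W with hLdef
  set φ : EuclideanSpace ℝ (Fin d) → EuclideanSpace ℝ (Fin d) := fun y => m' + L y with hφ
  have hφ_coord : ∀ (y : EuclideanSpace ℝ (Fin d)) (i : Fin d),
      φ y i - mm i = (W *ᵥ (WithLp.equiv 2 (Fin d → ℝ) y)) i := by
    intro y i
    rw [hφ]
    simp only [PiLp.add_apply, hm', hLdef, Matrix.toEuclideanLin_apply,
      WithLp.equiv_apply, WithLp.equiv_symm_apply, PiLp.toLp_apply]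
    ring
  have hgφ : ∀ y : EuclideanSpace ℝ (Fin d), g (φ y) = ‖y‖^2 := by
    intro y
    set ya : Fin d → ℝ := WithLp.equiv 2 (Fin d → ℝ) y with hya
    have hfun : (fun i => φ y i - mm i) = W *ᵥ ya := funext (hφ_coord y)
    have h1 : g (φ y) = (W *ᵥ ya) ⬝ᵥ A *ᵥ (W *ᵥ ya) := by
      rw [hg_quad, hfun]
    rw [h1, Matrix.mulVec_mulVec, ← Matrix.vecMul_transpose, hWT,
      dotProduct_mulVec, Matrix.vecMul_vecMul, ← Matrix.mul_assoc]
    rw [show W * A * W = 1 from by rw [Matrix.mul_assoc]; exact hWAW]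
    rw [Matrix.vecMul_one, PiLp.norm_sq_eq_of_L2]
    simp only [dotProduct]
    refine Finset.sum_congr rfl fun i _ => ?_
    rw [Real.norm_eq_abs, sq_abs, sq]
    rfl
  have hL_cont : Continuous L := LinearMap.continuous_of_finiteDimensional L
  have hφ_cont : Continuous φ := continuous_const.add hL_cont
  have hLdet : LinearMap.det (L : EuclideanSpace ℝ (Fin d) →ₗ[ℝ] EuclideanSpace ℝ (Fin d)) = 1 := by
    rw [hLdef, det_toEuclideanLin, hWdet]
  have hmapφ : Measure.map φ volume = volume := by
    have h1 : φ = (fun z => m' + z) ∘ (fun y => L y) := rfl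
    rw [h1, ← Measure.map_map (measurable_const_add m') hL_cont.measurable]
    have h2 : Measure.map (fun y => L y) volume = volume := by
      rw [Measure.map_linearMap_addHaar_eq_smul_addHaar volume (by rw [hLdet]; norm_num)]
      rw [hLdet]
      norm_num
    rw [h2]
    exact Measure.IsAddLeftInvariant.map_add_left_eq_self m'
  -- the ellipsoid
  set Eset : Set (EuclideanSpace ℝ (Fin d)) := {x | g x ≤ ρ^2} with hEset
  have hEm : MeasurableSet Eset := (isClosed_le hg_cont continuous_const).measurableSet
  have hpre : φ ⁻¹' Eset = Metric.closedBall (0:EuclideanSpace ℝ (Fin d)) ρ := by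
    ext y
    simp only [Set.mem_preimage, hEset, Set.mem_setOf_eq, mem_closedBall_zero_iff, hgφ y]
    constructor
    · intro h; nlinarith [norm_nonneg y]
    · intro h; nlinarith [norm_nonneg y]
  have hEvol : volume Eset = volume (Metric.ball (0:EuclideanSpace ℝ (Fin d)) ρ) := by
    have h1 := Measure.map_apply hφ_cont.measurable hEm (μ := volume)
    rw [hmapφ, hpre] at h1
    rw [h1, Measure.addHaar_closedBall_eq_addHaar_ball]
  have hEvol_ne_top : volume Eset ≠ ⊤ := by
    rw [hEvol]
    exact measure_ball_lt_top.ne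
  have hMvolE : M * (volume Eset).toReal = 1 := by rw [hEvol]; exact hMρ
  -- set integral of g over Eset
  have hballs_ae : Metric.closedBall (0:EuclideanSpace ℝ (Fin d)) ρ
      =ᵐ[volume] Metric.ball (0:EuclideanSpace ℝ (Fin d)) ρ := by
    rw [MeasureTheory.ae_eq_set]
    constructor
    · rw [Metric.closedBall_diff_ball]
      exact Measure.addHaar_sphere volume 0 ρ
    · rw [Set.diff_eq_empty.mpr Metric.ball_subset_closedBall]
      exact measure_empty
  have hintEg : ∫ x in Eset, g x = ∫ y in Metric.ball (0:EuclideanSpace ℝ (Fin d)) ρ, ‖y‖^2 := by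
    rw [← integral_indicator hEm]
    have h1 : ∫ x, Eset.indicator g x
        = ∫ y, Eset.indicator g (φ y) := by
      conv_lhs => rw [← hmapφ]
      rw [integral_map hφ_cont.measurable.aemeasurable
        ((hg_cont.aestronglyMeasurable).indicator hEm)]
    rw [h1]
    have h2 : ∀ y, Eset.indicator g (φ y)
        = (Metric.closedBall (0:EuclideanSpace ℝ (Fin d)) ρ).indicator
          (fun y : EuclideanSpace ℝ (Fin d) => ‖y‖^2) y := by
      intro y
      by_cases hy : y ∈ Metric.closedBall (0:EuclideanSpace ℝ (Fin d)) ρ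
      · have hy' : φ y ∈ Eset := by rw [← hpre] at hy; exact hy
        rw [Set.indicator_of_mem hy', Set.indicator_of_mem hy, hgφ y]
      · have hy' : φ y ∉ Eset := by rw [← hpre] at hy; exact hy
        rw [Set.indicator_of_notMem hy', Set.indicator_of_notMem hy]
    simp_rw [h2]
    rw [integral_indicator measurableSet_closedBall]
    exact setIntegral_congr_set hballs_ae
  -- bathtub principle
  have hg_int_E : IntegrableOn g Eset volume := by
    refine Measure.integrableOn_of_bounded (M := ρ^2) hEvol_ne_top hg_cont.aestronglyMeasurable ?_
    refine (ae_restrict_iff' hEm).mpr (Filter.Eventually.of_forall fun x hx => ?_)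
    rw [Real.norm_eq_abs, abs_of_nonneg (hg_nonneg x)]
    exact hx
  have hsplit_fg : (∫ x in Eset, f x * g x) + ∫ x in Esetᶜ, f x * g x = ∫ x, f x * g x :=
    integral_add_compl hEm hfg_int
  have hsplit_f : (∫ x in Eset, f x) + ∫ x in Esetᶜ, f x = 1 := by
    rw [integral_add_compl hEm hint, hprob]
  have hEbound : ∫ x in Eset, f x * g x
      ≥ M * (∫ x in Eset, g x) + ρ^2 * (∫ x in Eset, f x)
        - ρ^2 * M * (volume Eset).toReal := by
    have hconst_int : IntegrableOn (fun _ : EuclideanSpace ℝ (Fin d) => ρ^2 * M) Eset volume :=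
      integrableOn_const hEvol_ne_top
    have hadd_int : Integrable (fun x => M * g x + ρ^2 * f x) (volume.restrict Eset) :=
      (hg_int_E.const_mul M).add ((hint.restrict).const_mul (ρ^2))
    have h2int : Integrable (fun x => M * g x + ρ^2 * f x - ρ^2 * M) (volume.restrict Eset) :=
      hadd_int.sub hconst_int
    have hmono := setIntegral_mono_on h2int hfg_int.integrableOn hEm ?_
    · have hval : ∫ x in Eset, (M * g x + ρ^2 * f x - ρ^2 * M)
          = M * (∫ x in Eset, g x) + ρ^2 * (∫ x in Eset, f x)
            - ρ^2 * M * (volume Eset).toReal := by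
        rw [integral_sub hadd_int hconst_int,
          integral_add (hg_int_E.const_mul M) ((hint.restrict).const_mul (ρ^2)),
          MeasureTheory.integral_const_mul, MeasureTheory.integral_const_mul,
          setIntegral_const, smul_eq_mul, measureReal_def]
        ring
      rw [hval] at hmono
      exact hmono
    · intro x hx
      have hgx : g x ≤ ρ^2 := hx
      nlinarith [mul_nonneg (sub_nonneg.mpr hgx : (0:ℝ) ≤ ρ^2 - g x)
        (sub_nonneg.mpr (hfM x) : (0:ℝ) ≤ M - f x)]
  have hCbound : ∫ x in Esetᶜ, f x * g x ≥ ρ^2 * ∫ x in Esetᶜ, f x := by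
    have hmono := setIntegral_mono_on ((hint.restrict).const_mul (ρ^2))
      hfg_int.integrableOn hEm.compl ?_
    · rwa [MeasureTheory.integral_const_mul] at hmono
    · intro x hx
      have hgx : ρ^2 ≤ g x := le_of_lt (lt_of_not_ge hx)
      calc ρ^2 * f x ≤ g x * f x := mul_le_mul_of_nonneg_right hgx (hnn x)
        _ = f x * g x := by ring
  -- combine
  have hkey : (d:ℝ) * c ≥ M * ∫ x in Eset, g x := by
    have htot := hsplit_fg
    rw [hfg_integral] at htot
    have hs2 : ρ^2 * (∫ x in Eset, f x) + ρ^2 * (∫ x in Esetᶜ, f x) = ρ^2 := by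
      rw [← mul_add, hsplit_f, mul_one]
    have hs3 : ρ^2 * M * (volume Eset).toReal = ρ^2 := by
      rw [mul_assoc, hMvolE, mul_one]
    linarith [hEbound, hCbound]
  -- compute the right side
  set volB1 := (volume (Metric.ball (0:EuclideanSpace ℝ (Fin d)) 1)).toReal with hvolB1
  have hvolB1_pos : 0 < volB1 :=
    ENNReal.toReal_pos (measure_ball_pos volume _ one_pos).ne' measure_ball_lt_top.ne
  have hMvolB : M * (ρ^d * volB1) = 1 := by
    rw [← hMρ]
    congr 1
    rw [Measure.addHaar_ball volume _ hρ.le, ENNReal.toReal_mul,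
      ENNReal.toReal_ofReal (by positivity), finrank_euclideanSpace_fin]
  have hrhs : M * ∫ x in Eset, g x = (d:ℝ) * (ρ^2 / ((d:ℝ)+2)) := by
    rw [hintEg, ball_moment d hd ρ hρ, ← hvolB1]
    have hsplit : ρ^(d+2) = ρ^d * ρ^2 := pow_add ρ d 2
    rw [hsplit]
    have halg : M * ((d:ℝ)/((d:ℝ)+2) * (ρ^d * ρ^2) * volB1)
        = (d:ℝ) * (ρ^2/((d:ℝ)+2)) * (M * (ρ^d * volB1)) := by ring
    rw [halg, hMvolB, mul_one]
  have hc_ge : ρ^2 / ((d:ℝ)+2) ≤ c := by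
    rw [hrhs] at hkey
    have hdpos : (0:ℝ) < d := by exact_mod_cast hd
    exact (mul_le_mul_iff_right₀ hdpos).mp hkey
  have hdet_ge : (ρ^2/((d:ℝ)+2))^d ≤ S.det := by
    rw [← hcd]
    exact pow_le_pow_left₀ (by positivity) hc_ge d
  exact Real.sqrt_le_sqrt hdet_ge

theorem stmt_9 (d m : ℕ) (hd : 0 < d) (hm : 0 < m)
    (μ : EuclideanSpace ℝ (Fin d)) (r : ℝ) (hr : 0 < r)
    (u : EuclideanSpace ℝ (Fin d) → ℝ)
    (hu : u = (Metric.ball μ r).indicator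
        fun _ => ((volume (Metric.ball μ r)).toReal)⁻¹)
    (v : Fin m → EuclideanSpace ℝ (Fin d) → ℝ) (α : Fin m → ℝ)
    (hα : ∀ i, 0 < α i) (hαsum : ∑ i, α i = 1)
    (hmix : ∀ x, u x = ∑ i, α i * v i x)
    (hv_meas : ∀ i, Measurable (v i)) (hv_nonneg : ∀ i x, 0 ≤ v i x)
    (hv_int : ∀ i, Integrable (v i)) (hv_prob : ∀ i, ∫ x, v i x = 1)
    (mv : Fin m → Fin d → ℝ) (hmv : ∀ j i, mv j i = ∫ x, x i * v j x)
    (Sv : Fin m → Matrix (Fin d) (Fin d) ℝ)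
    (hSv_int : ∀ j i k,
      Integrable (fun x : EuclideanSpace ℝ (Fin d) => v j x * (x i - mv j i) * (x k - mv j k)))
    (hSv : ∀ j i k, Sv j i k = ∫ x, v j x * (x i - mv j i) * (x k - mv j k))
    (Su : Matrix (Fin d) (Fin d) ℝ)
    (hSu : ∀ i k, Su i k = ∫ x, u x * (x i - μ i) * (x k - μ k)) :
    ∑ j, Real.sqrt (Sv j).det ≥ Real.sqrt Su.det := by
  haveI := nontrivial_euclidean d hd
  set volr := (volume (Metric.ball μ r)).toReal with hvolr
  have hvolr_pos : 0 < volr :=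
    ENNReal.toReal_pos (measure_ball_pos volume μ hr).ne' measure_ball_lt_top.ne
  set volB1 := (volume (Metric.ball (0:EuclideanSpace ℝ (Fin d)) 1)).toReal with hvolB1
  have hvolB1_pos : 0 < volB1 :=
    ENNReal.toReal_pos (measure_ball_pos volume _ one_pos).ne' measure_ball_lt_top.ne
  have hvolr_eq : volr = r^d * volB1 := by
    rw [hvolr, hvolB1, Measure.addHaar_ball volume μ hr.le, ENNReal.toReal_mul,
      ENNReal.toReal_ofReal (by positivity), finrank_euclideanSpace_fin]
  set cst : ℝ := Real.sqrt ((r^2/((d:ℝ)+2))^d) with hcst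
  have hsu : Real.sqrt Su.det ≤ cst := su_bound d hd μ r hr u hu Su hSu
  have hvj : ∀ j, α j * cst ≤ Real.sqrt (Sv j).det := by
    intro j
    set Mj : ℝ := ((α j) * volr)⁻¹ with hMj
    have hMjpos : 0 < Mj := by
      rw [hMj]
      exact inv_pos.mpr (mul_pos (hα j) hvolr_pos)
    set ρj : ℝ := (α j) ^ ((d:ℝ)⁻¹) * r with hρj
    have hρjpos : 0 < ρj := by
      rw [hρj]
      exact mul_pos (Real.rpow_pos_of_pos (hα j) _) hr
    have hαd : ((α j) ^ ((d:ℝ)⁻¹)) ^ d = α j :=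
      Real.rpow_inv_natCast_pow (hα j).le hd.ne'
    have hfM : ∀ x, v j x ≤ Mj := by
      intro x
      have h1 : α j * v j x ≤ u x := by
        rw [hmix x]
        exact Finset.single_le_sum (f := fun i => α i * v i x)
          (fun i _ => mul_nonneg (hα i).le (hv_nonneg i x)) (Finset.mem_univ j)
      have h2 : u x ≤ volr⁻¹ := by
        rw [hu]
        by_cases hx : x ∈ Metric.ball μ r
        · rw [Set.indicator_of_mem hx]
        · rw [Set.indicator_of_notMem hx]
          positivity
      have h3 : α j * v j x ≤ volr⁻¹ := le_trans h1 h2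
      rw [hMj, mul_inv]
      calc v j x = (α j)⁻¹ * (α j * v j x) := by
            rw [inv_mul_cancel_left₀ (hα j).ne']
        _ ≤ (α j)⁻¹ * volr⁻¹ := by
            exact mul_le_mul_of_nonneg_left h3 (inv_nonneg.mpr (hα j).le)
    have hMρ : Mj * (volume (Metric.ball (0:EuclideanSpace ℝ (Fin d)) ρj)).toReal = 1 := by
      rw [Measure.addHaar_ball volume _ hρjpos.le, ENNReal.toReal_mul,
        ENNReal.toReal_ofReal (pow_nonneg hρjpos.le _), finrank_euclideanSpace_fin, ← hvolB1]
      have hρd : ρj ^ d = α j * r^d := by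
        rw [hρj, mul_pow, hαd]
      rw [hρd, hMj, hvolr_eq]
      have hne : α j * (r ^ d * volB1) ≠ 0 := (mul_pos (hα j) (by positivity)).ne'
      rw [inv_mul_eq_div, mul_assoc, div_self hne]
    have hcore := core d hd (v j) (hv_meas j) (hv_nonneg j) (hv_int j) (hv_prob j)
      Mj ρj hMjpos hρjpos hfM hMρ (mv j) (Sv j) (hSv_int j) (hSv j)
    have heq : Real.sqrt ((ρj^2/((d:ℝ)+2))^d) = α j * cst := by
      have h1 : (ρj^2/((d:ℝ)+2))^d = (α j)^2 * ((r^2/((d:ℝ)+2))^d) := by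
        have h2 : ρj^2 = ((α j) ^ ((d:ℝ)⁻¹))^2 * r^2 := by
          rw [hρj, mul_pow]
        rw [h2, mul_div_assoc, mul_pow, ← pow_right_comm, hαd]
      rw [hcst, h1, Real.sqrt_mul (sq_nonneg _), Real.sqrt_sq (hα j).le]
    rw [heq] at hcore
    exact hcore
  calc ∑ j, Real.sqrt (Sv j).det ≥ ∑ j, α j * cst := Finset.sum_le_sum fun j _ => hvj j
    _ = cst := by rw [← Finset.sum_mul, hαsum, one_mul]
    _ ≥ Real.sqrt Su.det := hsu
end

section
/- Let $f = \alpha_1 g_1 + \cdots + \alpha_m g_m$ be a mixture of probability densities on $\mathbb{R}^d$ with positive weights summing to 1, all with finite second moments and positive definite covariances. Let $\tilde{f}$ and $\tilde{g}_i$ be the Gaussian densities with the same means and covariances as $f$ and $g_i$ respectively. If $|\Sigma_f|^{1/2} > |\Sigma_{g_1}|^{1/2} + \cdots + |\Sigma_{g_m}|^{1/2}$, then $KL(f \,\|\, \tilde{f}) > KL(f \,\|\, \alpha_1 \tilde{g}_1 + \cdots + \alpha_m \tilde{g}_m)$. -/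
open MeasureTheory Real Matrix Finset

lemma quad_expand_s15 {d : ℕ} (p : (Fin d → ℝ) → ℝ) (μ : Fin d → ℝ)
    (B : Matrix (Fin d) (Fin d) ℝ) (x : Fin d → ℝ) :
    p x * ((x - μ) ⬝ᵥ B.mulVec (x - μ))
      = ∑ i, ∑ k, B i k * (p x * (x i - μ i) * (x k - μ k)) := by
  simp only [dotProduct, Matrix.mulVec, Pi.sub_apply]
  rw [Finset.mul_sum]
  refine Finset.sum_congr rfl fun i _ => ?_
  rw [Finset.mul_sum, Finset.mul_sum]
  exact Finset.sum_congr rfl fun k _ => by ring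

lemma quad_integrable_s15 {d : ℕ} (p : (Fin d → ℝ) → ℝ) (μ : Fin d → ℝ)
    (B : Matrix (Fin d) (Fin d) ℝ)
    (hint : ∀ i k, Integrable (fun x : Fin d → ℝ => p x * (x i - μ i) * (x k - μ k))) :
    Integrable (fun x : Fin d → ℝ => p x * ((x - μ) ⬝ᵥ B.mulVec (x - μ))) := by
  simp only [quad_expand_s15]
  exact integrable_finset_sum _ fun i _ =>
    integrable_finset_sum _ fun k _ => (hint i k).const_mul _

lemma quad_integral {d : ℕ} (p : (Fin d → ℝ) → ℝ) (μ : Fin d → ℝ)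
    (A : Matrix (Fin d) (Fin d) ℝ)
    (hint : ∀ i k, Integrable (fun x : Fin d → ℝ => p x * (x i - μ i) * (x k - μ k)))
    (hA : ∀ i k, A i k = ∫ x, p x * (x i - μ i) * (x k - μ k))
    (hdet : IsUnit A.det) :
    ∫ x, p x * ((x - μ) ⬝ᵥ A⁻¹.mulVec (x - μ)) = d := by
  have hsymm : ∀ i k, A k i = A i k := by
    intro i k
    rw [hA, hA]
    congr 1
    funext x
    ring
  calc ∫ x, p x * ((x - μ) ⬝ᵥ A⁻¹.mulVec (x - μ))
      = ∫ x, ∑ i, ∑ k, A⁻¹ i k * (p x * (x i - μ i) * (x k - μ k)) := by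
        simp_rw [quad_expand_s15]
    _ = ∑ i, ∑ k, A⁻¹ i k * A i k := by
        rw [integral_finset_sum _ fun i _ =>
          integrable_finset_sum _ fun k _ => (hint i k).const_mul (A⁻¹ i k)]
        refine Finset.sum_congr rfl fun i _ => ?_
        rw [integral_finset_sum _ fun k _ => (hint i k).const_mul _]
        exact Finset.sum_congr rfl fun k _ => by rw [MeasureTheory.integral_const_mul, hA]
    _ = Matrix.trace (A⁻¹ * A) := by
        simp only [Matrix.trace, Matrix.diag, Matrix.mul_apply]
        exact Finset.sum_congr rfl fun i _ => Finset.sum_congr rfl fun k _ => by rw [hsymm]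
    _ = d := by rw [Matrix.nonsing_inv_mul A hdet, Matrix.trace_one]; simp

theorem stmt_15 (d m : ℕ) (hd : 0 < d) (hm : 0 < m)
    (g : Fin m → (Fin d → ℝ) → ℝ) (α : Fin m → ℝ)
    (hα : ∀ i, 0 < α i) (hαsum : ∑ i, α i = 1)
    (hg_meas : ∀ i, Measurable (g i)) (hg_nonneg : ∀ i x, 0 ≤ g i x)
    (hg_int : ∀ i, Integrable (g i)) (hg_prob : ∀ i, ∫ x, g i x = 1)
    (f : (Fin d → ℝ) → ℝ) (hf : ∀ x, f x = ∑ i, α i * g i x)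
    -- means and covariances of the components
    (μg : Fin m → Fin d → ℝ) (hμg : ∀ j i, μg j i = ∫ x, x i * g j x)
    (Sg : Fin m → Matrix (Fin d) (Fin d) ℝ)
    (hSg_int : ∀ j i k, Integrable (fun x : Fin d → ℝ => g j x * (x i - μg j i) * (x k - μg j k)))
    (hSg : ∀ j i k, Sg j i k = ∫ x, g j x * (x i - μg j i) * (x k - μg j k))
    (hSg_pd : ∀ j, (Sg j).PosDef)
    -- mean and covariance of the mixture
    (μf : Fin d → ℝ) (hμf : ∀ i, μf i = ∫ x, x i * f x)
    (Sf : Matrix (Fin d) (Fin d) ℝ)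
    (hSf_int : ∀ i k, Integrable (fun x : Fin d → ℝ => f x * (x i - μf i) * (x k - μf k)))
    (hSf : ∀ i k, Sf i k = ∫ x, f x * (x i - μf i) * (x k - μf k))
    (hSf_pd : Sf.PosDef)
    -- the matched Gaussian densities
    (ft : (Fin d → ℝ) → ℝ)
    (hft : ∀ x, ft x = (2 * π) ^ (-(d : ℝ) / 2) * Sf.det ^ (-(1 : ℝ) / 2) *
        Real.exp (-(1 / 2) * ((x - μf) ⬝ᵥ Sf⁻¹.mulVec (x - μf))))
    (gt : Fin m → (Fin d → ℝ) → ℝ)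
    (hgt : ∀ j x, gt j x = (2 * π) ^ (-(d : ℝ) / 2) * (Sg j).det ^ (-(1 : ℝ) / 2) *
        Real.exp (-(1 / 2) * ((x - μg j) ⬝ᵥ (Sg j)⁻¹.mulVec (x - μg j))))
    -- integrability of all the Kullback-Leibler integrands
    (hKL1 : Integrable (fun x => f x * Real.log (f x / ft x)))
    (hKL2 : Integrable (fun x => f x * Real.log (f x / ∑ j, α j * gt j x)))
    -- the pseudo-volume condition
    (hvol : Real.sqrt Sf.det > ∑ j, Real.sqrt (Sg j).det) :
    (∫ x, f x * Real.log (f x / ft x)) >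
      ∫ x, f x * Real.log (f x / ∑ j, α j * gt j x) := by
  have h2π : (0:ℝ) < 2 * π := by positivity
  have hdetf : 0 < Sf.det := hSf_pd.det_pos
  have hdetg : ∀ j, 0 < (Sg j).det := fun j => (hSg_pd j).det_pos
  -- constants
  set cf : ℝ := (2 * π) ^ (-(d : ℝ) / 2) * Sf.det ^ (-(1:ℝ)/2) with hcf_def
  set cg : Fin m → ℝ := fun j => (2 * π) ^ (-(d : ℝ) / 2) * (Sg j).det ^ (-(1:ℝ)/2) with hcg_def
  have hcf_pos : 0 < cf := mul_pos (rpow_pos_of_pos h2π _) (rpow_pos_of_pos hdetf _)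
  have hcg_pos : ∀ j, 0 < cg j := fun j =>
    mul_pos (rpow_pos_of_pos h2π _) (rpow_pos_of_pos (hdetg j) _)
  -- quadratic forms
  set Qf : (Fin d → ℝ) → ℝ := fun x => (x - μf) ⬝ᵥ Sf⁻¹.mulVec (x - μf) with hQf_def
  set Qg : Fin m → (Fin d → ℝ) → ℝ :=
    fun j x => (x - μg j) ⬝ᵥ (Sg j)⁻¹.mulVec (x - μg j) with hQg_def
  have hQf_nonneg : ∀ x, 0 ≤ Qf x := fun x => by
    have := hSf_pd.inv.posSemidef.dotProduct_mulVec_nonneg (x - μf)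
    simp only [RCLike.re_to_real, star_trivial] at this
    exact this
  have hQg_nonneg : ∀ j x, 0 ≤ Qg j x := fun j x => by
    have := (hSg_pd j).inv.posSemidef.dotProduct_mulVec_nonneg (x - μg j)
    simp only [RCLike.re_to_real, star_trivial] at this
    exact this
  have hft' : ∀ x, ft x = cf * Real.exp (-(1/2) * Qf x) := fun x => hft x
  have hgt' : ∀ j x, gt j x = cg j * Real.exp (-(1/2) * Qg j x) := fun j x => hgt j x
  have hft_pos : ∀ x, 0 < ft x := fun x => by
    rw [hft' x]; exact mul_pos hcf_pos (exp_pos _)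
  have hgt_pos : ∀ j x, 0 < gt j x := fun j x => by
    rw [hgt' j x]; exact mul_pos (hcg_pos j) (exp_pos _)
  have hlogft : ∀ x, Real.log (ft x) = Real.log cf + -(1/2) * Qf x := fun x => by
    rw [hft' x, Real.log_mul hcf_pos.ne' (exp_pos _).ne', Real.log_exp]
  have hloggt : ∀ j x, Real.log (gt j x) = Real.log (cg j) + -(1/2) * Qg j x := fun j x => by
    rw [hgt' j x, Real.log_mul (hcg_pos j).ne' (exp_pos _).ne', Real.log_exp]
  -- the mixture of Gaussians
  set q : (Fin d → ℝ) → ℝ := fun x => ∑ j, α j * gt j x with hq_def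
  have hq_eq : ∀ x, (∑ j, α j * gt j x) = q x := fun x => rfl
  have hq_pos : ∀ x, 0 < q x :=
    fun x => Finset.sum_pos (fun j _ => mul_pos (hα j) (hgt_pos j x))
      (Finset.univ_nonempty_iff.mpr (Fin.pos_iff_nonempty.mp hm))
  have hαgt_le_q : ∀ j x, α j * gt j x ≤ q x := fun j x =>
    Finset.single_le_sum (fun k _ => (mul_pos (hα k) (hgt_pos k x)).le) (Finset.mem_univ j)
  -- measurability
  have hgt_meas : ∀ j, Measurable (gt j) := by
    intro j
    have : gt j = fun x => cg j *
        Real.exp (-(1/2) * ((x - μg j) ⬝ᵥ (Sg j)⁻¹.mulVec (x - μg j))) := funext (hgt' j)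
    rw [this]
    simp only [dotProduct, Matrix.mulVec, Pi.sub_apply]
    fun_prop
  have hq_meas : Measurable q :=
    Finset.measurable_sum _ fun j _ => (hgt_meas j).const_mul _
  -- f is nonnegative and a probability density
  have hf_nonneg : ∀ x, 0 ≤ f x := fun x => by
    rw [hf x]; exact Finset.sum_nonneg fun j _ => mul_nonneg (hα j).le (hg_nonneg j x)
  -- f integrable, probability
  have hf_fun : f = fun x => ∑ j, α j * g j x := funext hf
  have hf_int : Integrable f := by
    rw [hf_fun]; exact integrable_finset_sum _ fun j _ => (hg_int j).const_mul _
  have hf_prob : ∫ x, f x = 1 := by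
    rw [hf_fun, integral_finset_sum _ fun j _ => (hg_int j).const_mul _]
    simp_rw [MeasureTheory.integral_const_mul, hg_prob, mul_one]
    exact hαsum
  -- quadratic-form integrals
  have hfQf_int : Integrable (fun x => f x * Qf x) := quad_integrable_s15 f μf Sf⁻¹ hSf_int
  have hfQf : ∫ x, f x * Qf x = d := quad_integral f μf Sf hSf_int hSf hdetf.ne'.isUnit
  have hgQg_int : ∀ j, Integrable (fun x => g j x * Qg j x) :=
    fun j => quad_integrable_s15 (g j) (μg j) (Sg j)⁻¹ (hSg_int j)
  have hgQg : ∀ j, ∫ x, g j x * Qg j x = d :=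
    fun j => quad_integral (g j) (μg j) (Sg j) (hSg_int j) (hSg j) (hdetg j).ne'.isUnit
  -- ∫ f log ft
  have hflogft_fun : (fun x => f x * Real.log (ft x))
      = fun x => Real.log cf * f x + (-(1/2)) * (f x * Qf x) := by
    funext x; rw [hlogft x]; ring
  have hflogft_int : Integrable (fun x => f x * Real.log (ft x)) := by
    rw [hflogft_fun]; exact (hf_int.const_mul _).add (hfQf_int.const_mul _)
  have hIft : ∫ x, f x * Real.log (ft x) = Real.log cf - d/2 := by
    rw [hflogft_fun, integral_add (hf_int.const_mul _) (hfQf_int.const_mul _),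
      MeasureTheory.integral_const_mul, MeasureTheory.integral_const_mul, hf_prob, hfQf]
    ring
  -- ∫ g j log (gt j)
  have hgloggt_fun : ∀ j, (fun x => g j x * Real.log (gt j x))
      = fun x => Real.log (cg j) * g j x + (-(1/2)) * (g j x * Qg j x) := by
    intro j; funext x; rw [hloggt j x]; ring
  have hgloggt_int : ∀ j, Integrable (fun x => g j x * Real.log (gt j x)) := fun j => by
    rw [hgloggt_fun j]; exact ((hg_int j).const_mul _).add ((hgQg_int j).const_mul _)
  have hIggt : ∀ j, ∫ x, g j x * Real.log (gt j x) = Real.log (cg j) - d/2 := fun j => by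
    rw [hgloggt_fun j, integral_add ((hg_int j).const_mul _) ((hgQg_int j).const_mul _),
      MeasureTheory.integral_const_mul, MeasureTheory.integral_const_mul, hg_prob j, hgQg j]
    ring
  -- integrability of g j * log q
  have hne : (Finset.univ : Finset (Fin m)).Nonempty :=
    Finset.univ_nonempty_iff.mpr (Fin.pos_iff_nonempty.mp hm)
  set C : ℝ := ∑ j, α j * cg j with hC_def
  have hC_pos : 0 < C := Finset.sum_pos (fun j _ => mul_pos (hα j) (hcg_pos j)) hne
  have hgt_le : ∀ j x, gt j x ≤ cg j := fun j x => by
    rw [hgt' j x]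
    calc cg j * Real.exp (-(1/2) * Qg j x) ≤ cg j * 1 := by
          refine mul_le_mul_of_nonneg_left ?_ (hcg_pos j).le
          rw [Real.exp_le_one_iff]
          have := hQg_nonneg j x
          linarith
      _ = cg j := mul_one _
  have hq_le : ∀ x, q x ≤ C :=
    fun x => Finset.sum_le_sum fun j _ => mul_le_mul_of_nonneg_left (hgt_le j x) (hα j).le
  have hlq_ub : ∀ x, Real.log (q x) ≤ |Real.log C| :=
    fun x => (Real.log_le_log (hq_pos x) (hq_le x)).trans (le_abs_self _)
  have hlq_lb : ∀ j x, Real.log (α j * cg j) - (1/2) * Qg j x ≤ Real.log (q x) := fun j x => by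
    have h1 : Real.log (α j * gt j x) ≤ Real.log (q x) :=
      Real.log_le_log (mul_pos (hα j) (hgt_pos j x)) (hαgt_le_q j x)
    have h2 : Real.log (α j * gt j x) = Real.log (α j * cg j) - (1/2) * Qg j x := by
      rw [hgt' j x, ← mul_assoc, Real.log_mul (mul_pos (hα j) (hcg_pos j)).ne' (exp_pos _).ne',
        Real.log_exp]
      ring
    linarith
  have habs_lq : ∀ j x, |Real.log (q x)|
      ≤ |Real.log C| + |Real.log (α j * cg j)| + (1/2) * Qg j x := fun j x => by
    rw [abs_le]
    constructor
    · have h1 := hlq_lb j x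
      have h3 := neg_abs_le (Real.log (α j * cg j))
      have h4 : (0:ℝ) ≤ |Real.log C| := abs_nonneg _
      linarith
    · have h1 := hlq_ub x
      have h2 := hQg_nonneg j x
      have h4 : (0:ℝ) ≤ |Real.log (α j * cg j)| := abs_nonneg _
      linarith
  have hglogq_int : ∀ j, Integrable (fun x => g j x * Real.log (q x)) := by
    intro j
    have hbound : Integrable (fun x => (|Real.log C| + |Real.log (α j * cg j)|) * g j x
        + (1/2) * (g j x * Qg j x)) :=
      ((hg_int j).const_mul _).add ((hgQg_int j).const_mul _)
    refine hbound.mono'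
      ((hg_meas j).mul (Real.measurable_log.comp hq_meas)).aestronglyMeasurable
      (Filter.Eventually.of_forall fun x => ?_)
    rw [Real.norm_eq_abs, abs_mul, abs_of_nonneg (hg_nonneg j x)]
    calc g j x * |Real.log (q x)|
        ≤ g j x * (|Real.log C| + |Real.log (α j * cg j)| + (1/2) * Qg j x) :=
          mul_le_mul_of_nonneg_left (habs_lq j x) (hg_nonneg j x)
      _ = (|Real.log C| + |Real.log (α j * cg j)|) * g j x + (1/2) * (g j x * Qg j x) := by ring
  -- split ∫ f log q over the mixture
  have hflogq_fun : (fun x => f x * Real.log (q x))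
      = fun x => ∑ j, α j * (g j x * Real.log (q x)) := by
    funext x
    rw [hf x, Finset.sum_mul]
    exact Finset.sum_congr rfl fun j _ => by ring
  have hflogq_int : Integrable (fun x => f x * Real.log (q x)) := by
    rw [hflogq_fun]; exact integrable_finset_sum _ fun j _ => (hglogq_int j).const_mul _
  have hIfq : ∫ x, f x * Real.log (q x) = ∑ j, α j * ∫ x, g j x * Real.log (q x) := by
    rw [hflogq_fun, integral_finset_sum _ fun j _ => (hglogq_int j).const_mul _]
    exact Finset.sum_congr rfl fun j _ => MeasureTheory.integral_const_mul _ _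
  -- lower bound for each component
  have hcomp : ∀ j, Real.log (α j) + (Real.log (cg j) - d/2) ≤ ∫ x, g j x * Real.log (q x) := by
    intro j
    have hfun : (fun x => g j x * Real.log (α j * gt j x))
        = fun x => Real.log (α j) * g j x + g j x * Real.log (gt j x) := by
      funext x
      rw [Real.log_mul (hα j).ne' (hgt_pos j x).ne']; ring
    have hlhs_int : Integrable (fun x => g j x * Real.log (α j * gt j x)) := by
      rw [hfun]; exact ((hg_int j).const_mul _).add (hgloggt_int j)
    have hmono : ∫ x, g j x * Real.log (α j * gt j x) ≤ ∫ x, g j x * Real.log (q x) := by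
      refine integral_mono hlhs_int (hglogq_int j) fun x => ?_
      exact mul_le_mul_of_nonneg_left
        (Real.log_le_log (mul_pos (hα j) (hgt_pos j x)) (hαgt_le_q j x)) (hg_nonneg j x)
    have heq : ∫ x, g j x * Real.log (α j * gt j x)
        = Real.log (α j) + (Real.log (cg j) - d/2) := by
      rw [hfun, integral_add ((hg_int j).const_mul _) (hgloggt_int j),
        MeasureTheory.integral_const_mul, hg_prob j, hIggt j, mul_one]
    linarith
  have hlower : ∑ j, α j * (Real.log (α j) + (Real.log (cg j) - d/2))
      ≤ ∫ x, f x * Real.log (q x) := by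
    rw [hIfq]
    exact Finset.sum_le_sum fun j _ => mul_le_mul_of_nonneg_left (hcomp j) (hα j).le
  -- determinant bookkeeping
  set s : Fin m → ℝ := fun j => Real.sqrt (Sg j).det with hs_def
  set S : ℝ := Real.sqrt Sf.det with hS_def
  set T : ℝ := ∑ j, s j with hT_def
  have hs_pos : ∀ j, 0 < s j := fun j => Real.sqrt_pos.mpr (hdetg j)
  have hS_pos : 0 < S := Real.sqrt_pos.mpr hdetf
  have hT_pos : 0 < T := Finset.sum_pos (fun j _ => hs_pos j) hne
  have hvol' : T < S := hvol
  set K : ℝ := (-(d:ℝ)/2) * Real.log (2*π) with hK_def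
  have hlogcf : Real.log cf = K - Real.log S := by
    rw [hcf_def, Real.log_mul (rpow_pos_of_pos h2π _).ne' (rpow_pos_of_pos hdetf _).ne',
      Real.log_rpow h2π, Real.log_rpow hdetf, hS_def, Real.log_sqrt hdetf.le, hK_def]
    ring
  have hlogcg : ∀ j, Real.log (cg j) = K - Real.log (s j) := fun j => by
    have : cg j = (2 * π) ^ (-(d : ℝ) / 2) * (Sg j).det ^ (-(1:ℝ)/2) := rfl
    rw [this, Real.log_mul (rpow_pos_of_pos h2π _).ne' (rpow_pos_of_pos (hdetg j) _).ne',
      Real.log_rpow h2π, Real.log_rpow (hdetg j), hK_def]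
    have hsj : s j = Real.sqrt (Sg j).det := rfl
    rw [hsj, Real.log_sqrt (hdetg j).le]
    ring
  -- Gibbs inequality
  have hgibbs : -Real.log T ≤ ∑ j, α j * (Real.log (α j) - Real.log (s j)) := by
    have h1 : ∀ j ∈ Finset.univ,
        α j * (Real.log (s j) - Real.log (α j) - Real.log T) ≤ s j / T - α j := by
      intro j _
      have hpos : 0 < s j / (α j * T) := div_pos (hs_pos j) (mul_pos (hα j) hT_pos)
      have h2 := Real.log_le_sub_one_of_pos hpos
      have h3 : Real.log (s j / (α j * T))
          = Real.log (s j) - (Real.log (α j) + Real.log T) := by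
        rw [Real.log_div (hs_pos j).ne' (mul_pos (hα j) hT_pos).ne',
          Real.log_mul (hα j).ne' hT_pos.ne']
      rw [h3] at h2
      have h4 : α j * (Real.log (s j) - (Real.log (α j) + Real.log T))
          ≤ α j * (s j / (α j * T) - 1) := mul_le_mul_of_nonneg_left h2 (hα j).le
      have h5 : α j * (s j / (α j * T) - 1) = s j / T - α j := by
        field_simp [(hα j).ne', hT_pos.ne']
      calc α j * (Real.log (s j) - Real.log (α j) - Real.log T)
          = α j * (Real.log (s j) - (Real.log (α j) + Real.log T)) := by ring
        _ ≤ α j * (s j / (α j * T) - 1) := h4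
        _ = s j / T - α j := h5
    have h6 := Finset.sum_le_sum h1
    have h7 : ∑ j, (s j / T - α j) = 0 := by
      rw [Finset.sum_sub_distrib, ← Finset.sum_div, hαsum, ← hT_def, div_self hT_pos.ne']
      ring
    have h8 : ∑ j, α j * (Real.log (s j) - Real.log (α j) - Real.log T)
        = (∑ j, α j * (Real.log (s j) - Real.log (α j))) - Real.log T := by
      have he : ∀ j, α j * (Real.log (s j) - Real.log (α j) - Real.log T)
          = α j * (Real.log (s j) - Real.log (α j)) - α j * Real.log T := fun j => by ring
      simp_rw [he]
      rw [Finset.sum_sub_distrib, ← Finset.sum_mul, hαsum, one_mul]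
    have h9 : ∀ j, α j * (Real.log (s j) - Real.log (α j))
        = -(α j * (Real.log (α j) - Real.log (s j))) := fun j => by ring
    rw [h7, h8] at h6
    simp_rw [h9] at h6
    rw [Finset.sum_neg_distrib] at h6
    linarith
  -- rewrite the lower bound sum
  have e1 : ∑ j, α j * (Real.log (α j) + (Real.log (cg j) - (d:ℝ)/2))
      = (∑ j, α j * (Real.log (α j) - Real.log (s j))) + (K - (d:ℝ)/2) := by
    have he : ∀ j, α j * (Real.log (α j) + (Real.log (cg j) - (d:ℝ)/2))
        = α j * (Real.log (α j) - Real.log (s j)) + α j * (K - (d:ℝ)/2) := fun j => by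
      rw [hlogcg j]; ring
    simp_rw [he]
    rw [Finset.sum_add_distrib, ← Finset.sum_mul, hαsum, one_mul]
  -- putting everything together
  have hlogTS : Real.log T < Real.log S := Real.log_lt_log hT_pos hvol'
  have hmain : ∫ x, f x * Real.log (ft x) < ∫ x, f x * Real.log (q x) := by
    rw [hIft, hlogcf]
    have := hlower
    rw [e1] at this
    linarith
  -- relate the KL integrals
  have hKL2' : Integrable (fun x => f x * Real.log (f x / q x)) := hKL2
  have hsplit : (fun x => f x * Real.log (f x / ft x))
      = fun x => f x * Real.log (f x / q x)
        + (f x * Real.log (q x) - f x * Real.log (ft x)) := by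
    funext x
    rcases eq_or_lt_of_le (hf_nonneg x) with h0 | hpos
    · rw [← h0]; ring
    · rw [Real.log_div hpos.ne' (hft_pos x).ne', Real.log_div hpos.ne' (hq_pos x).ne']
      ring
  have hgoal_eq : (∫ x, f x * Real.log (f x / ft x))
      = (∫ x, f x * Real.log (f x / q x))
        + ((∫ x, f x * Real.log (q x)) - ∫ x, f x * Real.log (ft x)) := by
    have hsub : Integrable (fun x => f x * Real.log (q x) - f x * Real.log (ft x)) :=
      hflogq_int.sub hflogft_int
    rw [hsplit, integral_add hKL2' hsub,
      integral_sub hflogq_int hflogft_int]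
  show (∫ x, f x * Real.log (f x / ft x)) > ∫ x, f x * Real.log (f x / q x)
  rw [hgoal_eq]
  linarith
end

section
/- Let $f$ be an elliptical unimodal probability density on $\mathbb{R}^d$, i.e. $f(x) = p\{(x-\mu)^T\Sigma^{-1}(x-\mu)\}$ for a non-increasing positive function $p$ on $[0,\infty)$ and positive definite $\Sigma$. Then for every $\epsilon > 0$ there exist $n \ge 1$, radii $r_1, \dots, r_n > 0$, and weights $b_j = r_j^d/\sum_i r_i^d$, such that the mixture $g_n = \sum_{j=1}^n b_j u_j$ of uniform densities $u_j(x) \propto \mathbb{1}_{(x-\mu)^T\Sigma^{-1}(x-\mu) < r_j^2}$ satisfies $\int |g_n(x) - f(x)|\,dx < \epsilon$. -/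
open MeasureTheory Matrix Finset Set Pointwise

private lemma aux_smul_quad {d : ℕ} (A : Matrix (Fin d) (Fin d) ℝ) (c : ℝ) (v : Fin d → ℝ) :
    (c • v) ⬝ᵥ A.mulVec (c • v) = c^2 * (v ⬝ᵥ A.mulVec v) := by
  rw [Matrix.mulVec_smul, smul_dotProduct, dotProduct_smul, smul_eq_mul, smul_eq_mul]; ring

private lemma aux_scale {d : ℕ} (μ : Fin d → ℝ) (A : Matrix (Fin d) (Fin d) ℝ)
    (Rel : ℝ → ℝ → Prop) {r : ℝ} (hr : 0 < r)
    (hRel : ∀ a b : ℝ, Rel (r^2 * a) (r^2 * b) ↔ Rel a b) :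
    volume {x : Fin d → ℝ | Rel ((x - μ) ⬝ᵥ A.mulVec (x - μ)) (r^2)}
      = ENNReal.ofReal (r ^ d) * volume {x : Fin d → ℝ | Rel ((x - μ) ⬝ᵥ A.mulVec (x - μ)) 1} := by
  have hvadd : ∀ s : ℝ, {x : Fin d → ℝ | Rel ((x - μ) ⬝ᵥ A.mulVec (x - μ)) s}
      = μ +ᵥ {v : Fin d → ℝ | Rel (v ⬝ᵥ A.mulVec v) s} := by
    intro s
    ext x
    rw [Set.mem_vadd_set_iff_neg_vadd_mem]
    have : -μ +ᵥ x = x - μ := by show -μ + x = x - μ; ring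
    rw [this]
    rfl
  have hsmul : {v : Fin d → ℝ | Rel (v ⬝ᵥ A.mulVec v) (r^2)}
      = r • {v : Fin d → ℝ | Rel (v ⬝ᵥ A.mulVec v) 1} := by
    ext v
    rw [Set.mem_smul_set_iff_inv_smul_mem₀ hr.ne']
    show Rel (v ⬝ᵥ A.mulVec v) (r^2) ↔ Rel ((r⁻¹ • v) ⬝ᵥ A.mulVec (r⁻¹ • v)) 1
    rw [aux_smul_quad, ← hRel (r⁻¹^2 * (v ⬝ᵥ A.mulVec v)) 1]
    have h1 : r^2 * (r⁻¹^2 * (v ⬝ᵥ A.mulVec v)) = v ⬝ᵥ A.mulVec v := by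
      field_simp
    have h2 : r^2 * (1:ℝ) = r^2 := mul_one _
    rw [h1, h2]
  rw [hvadd, hvadd, measure_vadd (μ := volume), measure_vadd (μ := volume), hsmul,
    Measure.addHaar_smul_of_nonneg volume hr.le]
  congr 2
  rw [Module.finrank_pi]
  simp

private lemma aux_fin {d : ℕ} {f : (Fin d → ℝ) → ℝ} (hf_int : Integrable f)
    {B : Set (Fin d → ℝ)} (hB : MeasurableSet B) {c : ℝ} (hc : 0 < c)
    (hcf : ∀ x ∈ B, c ≤ f x) : volume B < ⊤ := by
  by_contra h
  have hB_top : volume B = ⊤ := by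
    exact top_le_iff.1 (not_lt.1 h)
  have h1 : ∫⁻ x, B.indicator (fun _ => ENNReal.ofReal c) x ≤ ∫⁻ x, ‖f x‖₊ := by
    apply lintegral_mono
    intro x
    by_cases hx : x ∈ B
    · rw [Set.indicator_of_mem hx]
      show ENNReal.ofReal c ≤ (‖f x‖₊ : ENNReal)
      rw [show ((‖f x‖₊ : ENNReal)) = ENNReal.ofReal ‖f x‖ from (ofReal_norm _).symm]
      exact ENNReal.ofReal_le_ofReal ((hcf x hx).trans (le_abs_self _))
    · simp [Set.indicator_of_notMem hx]
  rw [lintegral_indicator_const hB, hB_top, ENNReal.mul_top (by simpa using hc)] at h1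
  have := hf_int.2
  rw [HasFiniteIntegral] at this
  exact absurd (lt_of_lt_of_le this h1) (lt_irrefl _)

private lemma aux_univ {d : ℕ} (hd : 0 < d) {f : (Fin d → ℝ) → ℝ} (hf_int : Integrable f)
    {c : ℝ} (hc : 0 < c) (hcf : ∀ x, c ≤ f x) : False := by
  have h := aux_fin hf_int MeasurableSet.univ hc (fun x _ => hcf x)
  have huniv : volume (univ : Set (Fin d → ℝ)) = ⊤ := by
    rw [MeasureTheory.volume_pi, Measure.pi_univ]
    simp [Real.volume_univ]
    exact fun h => absurd h hd.ne'
  rw [huniv] at h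
  exact absurd h (lt_irrefl _)

set_option maxHeartbeats 1000000 in
theorem stmt_19 (d : ℕ) (hd : 0 < d)
    (μ : Fin d → ℝ) (S : Matrix (Fin d) (Fin d) ℝ) (hS : S.PosDef)
    (p : ℝ → ℝ) (hp_pos : ∀ y : ℝ, 0 ≤ y → 0 < p y) (hp_mono : AntitoneOn p (Ici 0))
    (f : (Fin d → ℝ) → ℝ)
    (hf : ∀ x, f x = p ((x - μ) ⬝ᵥ S⁻¹.mulVec (x - μ)))
    (hf_int : Integrable f) (hf_prob : ∫ x, f x = 1)
    (ε : ℝ) (hε : 0 < ε) :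
    ∃ (n : ℕ) (_ : 1 ≤ n) (r : Fin n → ℝ), (∀ j, 0 < r j) ∧
      ∫ x, |(∑ j, (r j ^ d / ∑ i, r i ^ d) *
          ((volume {y : Fin d → ℝ | (y - μ) ⬝ᵥ S⁻¹.mulVec (y - μ) < r j ^ 2}).toReal⁻¹ *
            ({y : Fin d → ℝ | (y - μ) ⬝ᵥ S⁻¹.mulVec (y - μ) < r j ^ 2}.indicator
              (fun _ => (1 : ℝ)) x))) - f x| < ε := by
  classical
  haveI : Nonempty (Fin d) := ⟨⟨0, hd⟩⟩
  have hA : (S⁻¹).PosDef := hS.inv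
  set A := S⁻¹ with hA_def
  set q : (Fin d → ℝ) → ℝ := fun x => (x - μ) ⬝ᵥ A.mulVec (x - μ) with hq_def
  have hq_cont : Continuous q := by
    simp only [hq_def, dotProduct, mulVec]
    fun_prop
  have hq_nonneg : ∀ x, 0 ≤ q x := fun x => by
    have := hA.posSemidef.dotProduct_mulVec_nonneg (x - μ)
    rwa [star_trivial] at this
  have hq_pos : ∀ x, x ≠ μ → 0 < q x := fun x hx => by
    have := hA.dotProduct_mulVec_pos (x := x - μ) (sub_ne_zero.2 hx)
    rwa [star_trivial] at this
  have hqμ : q μ = 0 := by simp [hq_def]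
  set E : ℝ → Set (Fin d → ℝ) := fun s => {x | q x < s} with hE_def
  have hE_open : ∀ s, IsOpen (E s) := fun s => isOpen_lt hq_cont continuous_const
  have hE_meas : ∀ s, MeasurableSet (E s) := fun s => (hE_open s).measurableSet
  set C : ENNReal := volume (E 1) with hC_def
  have hscale : ∀ r : ℝ, 0 < r → volume (E (r^2)) = ENNReal.ofReal (r^d) * C := by
    intro r hr
    exact aux_scale μ A (· < ·) hr (fun a b => mul_lt_mul_iff_right₀ (by positivity))
  have hscale_le : ∀ r : ℝ, 0 < r →
      volume {x | q x ≤ r^2} = ENNReal.ofReal (r^d) * volume {x | q x ≤ 1} := by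
    intro r hr
    exact aux_scale μ A (· ≤ ·) hr (fun a b => mul_le_mul_iff_right₀ (by positivity))
  have hC_pos : 0 < C := (hE_open 1).measure_pos volume ⟨μ, by simp [hE_def, hqμ]⟩
  have hfq : ∀ x, f x = p (q x) := hf
  have hfin : ∀ s : ℝ, 0 ≤ s → volume {x | q x ≤ s} < ⊤ := by
    intro s hs
    refine aux_fin hf_int ?_ (hp_pos s hs) ?_
    · exact (isClosed_le hq_cont continuous_const).measurableSet
    · intro x hx
      rw [hfq x]
      exact hp_mono (hq_nonneg x) hs hx
  have hC_fin : C < ⊤ := by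
    refine lt_of_le_of_lt (measure_mono ?_) (hfin 1 zero_le_one)
    intro x hx
    exact le_of_lt (show q x < 1 from hx)
  -- closed and open ellipsoids have the same volume
  have hDC : volume {x | q x ≤ (1:ℝ)} = C := by
    refine le_antisymm ?_ (measure_mono (fun x hx => le_of_lt (show q x < 1 from hx)))
    have hstep : ∀ n : ℕ, volume {x | q x ≤ (1:ℝ)}
        ≤ ENNReal.ofReal ((1 + 1/((n:ℝ)+1))^d) * C := by
      intro n
      have hr : (0:ℝ) < 1 + 1/((n:ℝ)+1) := by positivity
      rw [← hscale _ hr]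
      refine measure_mono ?_
      intro x hx
      show q x < (1 + 1/((n:ℝ)+1))^2
      have h1 : (1:ℝ) < (1 + 1/((n:ℝ)+1))^2 := by
        have : (0:ℝ) < 1/((n:ℝ)+1) := by positivity
        nlinarith
      exact lt_of_le_of_lt (show q x ≤ 1 from hx) h1
    have hlim : Filter.Tendsto (fun n : ℕ => ENNReal.ofReal ((1 + 1/((n:ℝ)+1))^d) * C)
        Filter.atTop (nhds C) := by
      have t0 : Filter.Tendsto (fun n : ℕ => (1 + 1/((n:ℝ)+1))^d) Filter.atTop (nhds 1) := by
        have t1 : Filter.Tendsto (fun n : ℕ => 1 + 1/((n:ℝ)+1)) Filter.atTop (nhds 1) := by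
          have : Filter.Tendsto (fun n : ℕ => 1 / ((n : ℝ) + 1)) Filter.atTop (nhds 0) :=
            tendsto_one_div_add_atTop_nhds_zero_nat
          have h2 := Filter.Tendsto.const_add (1:ℝ) this
          simpa using h2
        have := t1.pow d
        simpa using this
      have t2 : Filter.Tendsto (fun n : ℕ => ENNReal.ofReal ((1 + 1/((n:ℝ)+1))^d))
          Filter.atTop (nhds 1) := by
        have := (ENNReal.continuous_ofReal.tendsto 1).comp t0
        simpa [Function.comp_def] using this
      have := ENNReal.Tendsto.mul_const (b := C) t2 (Or.inl one_ne_zero)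
      simpa using this
    exact ge_of_tendsto' hlim hstep |>.trans (le_refl _) |>.trans_eq rfl
  have hle_eq : ∀ r : ℝ, 0 < r → volume {x | q x ≤ r^2} = volume (E (r^2)) := by
    intro r hr
    rw [hscale_le r hr, hscale r hr, hDC]
  have hEfin : ∀ r : ℝ, 0 < r → volume (E (r^2)) < ⊤ := by
    intro r hr
    rw [hscale r hr]
    exact ENNReal.mul_lt_top ENNReal.ofReal_lt_top hC_fin
  have hnull : ∀ s : ℝ, 0 < s → volume {x | q x = s} = 0 := by
    intro s hs
    have hr : s = (Real.sqrt s)^2 := (Real.sq_sqrt hs.le).symm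
    have hrs : 0 < Real.sqrt s := Real.sqrt_pos.2 hs
    have hdiff : {x | q x = s} = {x | q x ≤ s} \ E s := by
      ext x
      simp only [Set.mem_setOf_eq, Set.mem_diff, hE_def]
      constructor
      · intro h; exact ⟨le_of_eq h, by simp [Set.mem_setOf_eq, h]⟩
      · rintro ⟨h1, h2⟩
        exact le_antisymm h1 (not_lt.1 (fun hc => h2 hc))
    have h3 : volume (E s) ≠ ⊤ := by rw [hr]; exact (hEfin _ hrs).ne
    have h0 := measure_diff (μ := volume) (s₁ := {x | q x ≤ s}) (s₂ := E s)
      (fun x hx => le_of_lt (show q x < s from hx)) ((hE_meas s).nullMeasurableSet) h3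
    rw [hdiff, h0]
    rw [hr, hle_eq _ hrs]
    exact tsub_self _
  -- the essential sup of p near 0
  set L : ℝ := ⨆ j : ℕ, p (((j:ℝ)+1)⁻¹) with hL_def
  have hL_bdd : BddAbove (Set.range fun j : ℕ => p (((j:ℝ)+1)⁻¹)) := by
    refine ⟨p 0, ?_⟩
    rintro y ⟨j, rfl⟩
    exact hp_mono (Set.mem_Ici.2 (le_refl 0)) (Set.mem_Ici.2 (by positivity)) (by positivity)
  have hL_pos : 0 < L := by
    have h1 : p ((((0:ℕ):ℝ)+1)⁻¹) ≤ L := le_ciSup hL_bdd 0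
    have h2 : ((((0:ℕ):ℝ)+1)⁻¹ : ℝ) = 1 := by norm_num
    rw [h2] at h1
    exact lt_of_lt_of_le (hp_pos 1 zero_le_one) h1
  have hL_ub : ∀ t : ℝ, 0 < t → p t ≤ L := by
    intro t ht
    obtain ⟨j, hj⟩ := exists_nat_one_div_lt ht
    rw [one_div] at hj
    calc p t ≤ p (((j:ℝ)+1)⁻¹) :=
          hp_mono (Set.mem_Ici.2 (by positivity)) (Set.mem_Ici.2 ht.le) hj.le
    _ ≤ L := le_ciSup hL_bdd j
  have hL_wit : ∀ c : ℝ, c < L → ∃ u : ℝ, 0 < u ∧ c < p u := by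
    intro c hc
    obtain ⟨j, hj⟩ := (lt_ciSup_iff hL_bdd).1 hc
    exact ⟨((j:ℝ)+1)⁻¹, by positivity, hj⟩
  -- the approximating sequence
  set δ : ℕ → ℝ := fun m => L / ((m:ℝ)+2) with hδ_def
  have hδ_pos : ∀ m : ℕ, 0 < δ m := fun m => by positivity
  have hkδ : ∀ (m : ℕ) (j : Fin (m+1)), ((j:ℝ)+1) * δ m < L := by
    intro m j
    have hj : ((j:ℝ)+1) ≤ (m:ℝ)+1 := by
      have := j.isLt
      have : ((j:ℕ):ℝ) ≤ (m:ℝ) := by exact_mod_cast Nat.lt_succ_iff.1 this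
      linarith
    have h2 : ((m:ℝ)+1) * δ m < L := by
      have h3 : ((m:ℝ)+2) * δ m = L := by
        rw [hδ_def]
        field_simp
      nlinarith [hδ_pos m]
    nlinarith [hδ_pos m]
  set Q : (m : ℕ) → Fin (m+1) → Set ℝ :=
    fun m j => {u : ℝ | 0 ≤ u ∧ ((j:ℝ)+1) * δ m < p u} with hQ_def
  have hQ_ne : ∀ m j, (Q m j).Nonempty := by
    intro m j
    obtain ⟨u, hu, hpu⟩ := hL_wit _ (hkδ m j)
    exact ⟨u, hu.le, hpu⟩
  have hQ_bdd : ∀ m j, BddAbove (Q m j) := by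
    intro m j
    have hB : ∃ B : ℝ, 0 ≤ B ∧ p B ≤ ((j:ℝ)+1) * δ m := by
      by_contra hcon
      push_neg at hcon
      refine aux_univ hd hf_int (c := ((j:ℝ)+1) * δ m) (by positivity) ?_
      intro x
      rw [hfq x]
      exact (hcon (q x) (hq_nonneg x)).le
    obtain ⟨B, hB0, hBp⟩ := hB
    refine ⟨B, ?_⟩
    rintro u ⟨hu0, hup⟩
    by_contra hc
    push_neg at hc
    exact absurd (le_trans (hp_mono hB0 (hB0.trans hc.le) hc.le) hBp) (not_le.2 hup)
  set sq : (m : ℕ) → Fin (m+1) → ℝ := fun m j => sSup (Q m j) with hsq_def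
  have hsq_pos : ∀ m j, 0 < sq m j := by
    intro m j
    obtain ⟨u, hu, hpu⟩ := hL_wit _ (hkδ m j)
    exact lt_of_lt_of_le hu (le_csSup (hQ_bdd m j) ⟨hu.le, hpu⟩)
  have hsq_iff : ∀ (m : ℕ) (j : Fin (m+1)) (t : ℝ), 0 ≤ t → t ≠ sq m j →
      (t < sq m j ↔ ((j:ℝ)+1) * δ m < p t) := by
    intro m j t ht hne
    constructor
    · intro hlt
      obtain ⟨u, hu, htu⟩ := exists_lt_of_lt_csSup (hQ_ne m j) hlt
      exact lt_of_lt_of_le hu.2 (hp_mono ht (ht.trans htu.le) htu.le)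
    · intro hp
      exact lt_of_le_of_ne (le_csSup (hQ_bdd m j) ⟨ht, hp⟩) hne
  set rr : (m : ℕ) → Fin (m+1) → ℝ := fun m j => Real.sqrt (sq m j) with hrr_def
  have hrr_pos : ∀ m j, 0 < rr m j := fun m j => Real.sqrt_pos.2 (hsq_pos m j)
  have hrr_sq : ∀ m j, (rr m j)^2 = sq m j := fun m j => Real.sq_sqrt (hsq_pos m j).le
  have hvol : ∀ m j, volume (E (sq m j)) = ENNReal.ofReal ((rr m j)^d) * C := by
    intro m j
    rw [← hrr_sq m j]
    exact hscale _ (hrr_pos m j)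
  have hvol_fin : ∀ m j, volume (E (sq m j)) < ⊤ := by
    intro m j
    rw [hvol m j]
    exact ENNReal.mul_lt_top ENNReal.ofReal_lt_top hC_fin
  have hvol_toReal : ∀ m j, (volume (E (sq m j))).toReal = (rr m j)^d * C.toReal := by
    intro m j
    rw [hvol m j, ENNReal.toReal_mul, ENNReal.toReal_ofReal (by positivity)]
  set Φ : ℕ → (Fin d → ℝ) → ℝ :=
    fun m x => δ m * ∑ j : Fin (m+1), (E (sq m j)).indicator (fun _ => (1:ℝ)) x with hΦ_def
  have hΦ_nonneg : ∀ m x, 0 ≤ Φ m x := by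
    intro m x
    refine mul_nonneg (hδ_pos m).le (Finset.sum_nonneg fun j _ => ?_)
    exact Set.indicator_nonneg (fun _ _ => zero_le_one) x
  have hΦ_meas : ∀ m, AEStronglyMeasurable (Φ m) volume := by
    intro m
    refine (Measurable.const_mul ?_ (δ m)).aestronglyMeasurable
    refine Finset.measurable_sum _ (fun j _ => ?_)
    exact measurable_const.indicator (hE_meas _)
  have hind_int : ∀ m j, Integrable ((E (sq m j)).indicator (fun _ => (1:ℝ))) := by
    intro m j
    rw [integrable_indicator_iff (hE_meas _)]
    exact integrableOn_const (hvol_fin m j).ne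
  have hΦ_int : ∀ m, Integrable (Φ m) := by
    intro m
    exact (integrable_finset_sum _ (fun j _ => hind_int m j)).const_mul (δ m)
  have hΦ_integral : ∀ m, ∫ x, Φ m x = δ m * ∑ j : Fin (m+1), (rr m j)^d * C.toReal := by
    intro m
    rw [hΦ_def]
    simp only
    rw [integral_const_mul]
    congr 1
    rw [integral_finset_sum _ (fun j _ => hind_int m j)]
    refine Finset.sum_congr rfl (fun j _ => ?_)
    rw [integral_indicator_const (1:ℝ) (hE_meas _), measureReal_def, hvol_toReal m j, smul_eq_mul, mul_one]
  have hae : ∀ᵐ x : Fin d → ℝ, x ≠ μ ∧ ∀ (m : ℕ) (j : Fin (m+1)), q x ≠ sq m j := by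
    have h1 : ∀ᵐ x : Fin d → ℝ, x ≠ μ := by
      rw [ae_iff]
      have h : {x : Fin d → ℝ | ¬ x ≠ μ} = {μ} := by ext x; simp
      rw [h]
      exact measure_singleton μ
    have h2 : ∀ᵐ x : Fin d → ℝ, ∀ (m : ℕ) (j : Fin (m+1)), q x ≠ sq m j := by
      rw [ae_all_iff]
      intro m
      rw [ae_all_iff]
      intro j
      rw [ae_iff]
      have h : {x | ¬ q x ≠ sq m j} = {x | q x = sq m j} := by ext x; simp
      rw [h]
      exact hnull _ (hsq_pos m j)
    exact h1.and h2
  have hkey : ∀ᵐ x : Fin d → ℝ, ∀ m : ℕ, Φ m x ≤ f x ∧ f x ≤ Φ m x + δ m := by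
    filter_upwards [hae] with x hx
    obtain ⟨hxμ, hxs⟩ := hx
    intro m
    have ht0 : 0 ≤ q x := hq_nonneg x
    have htpos : 0 < q x := hq_pos x hxμ
    have hfx : f x = p (q x) := hfq x
    have hpt_pos : 0 < p (q x) := hp_pos _ ht0
    have hfL : p (q x) ≤ L := hL_ub _ htpos
    have hind : ∀ j : Fin (m+1), (E (sq m j)).indicator (fun _ => (1:ℝ)) x
        = if ((j:ℝ)+1) * δ m < p (q x) then 1 else 0 := by
      intro j
      by_cases hc : ((j:ℝ)+1) * δ m < p (q x)
      · rw [if_pos hc]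
        refine Set.indicator_of_mem ?_ _
        show q x < sq m j
        exact (hsq_iff m j (q x) ht0 (hxs m j)).2 hc
      · rw [if_neg hc]
        refine Set.indicator_of_notMem ?_ _
        show ¬ q x < sq m j
        intro hlt
        exact hc ((hsq_iff m j (q x) ht0 (hxs m j)).1 hlt)
    have hsum : Φ m x = δ m * ((Finset.univ.filter
        (fun j : Fin (m+1) => ((j:ℝ)+1) * δ m < p (q x))).card : ℝ) := by
      rw [hΦ_def]
      simp only
      congr 1
      rw [Finset.sum_congr rfl (fun j _ => hind j), Finset.sum_boole]
    set Fs := Finset.univ.filter (fun j : Fin (m+1) => ((j:ℝ)+1) * δ m < p (q x)) with hFs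
    constructor
    · rw [hfx, hsum]
      rcases Finset.eq_empty_or_nonempty Fs with he | hne
      · rw [he]; simpa using hpt_pos.le
      · have hj_mem : Fs.max' hne ∈ Fs := Fs.max'_mem hne
        set jmax := Fs.max' hne with hjm
        have hsub : Fs ⊆ Finset.Iic jmax := fun j hj => Finset.mem_Iic.2 (Fs.le_max' j hj)
        have hcard : Fs.card ≤ (jmax : ℕ) + 1 := by
          have := Finset.card_le_card hsub
          rwa [Fin.card_Iic] at this
        have hjc : ((jmax:ℝ)+1) * δ m < p (q x) := (Finset.mem_filter.1 hj_mem).2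
        have hcast : (Fs.card : ℝ) ≤ (jmax:ℝ) + 1 := by exact_mod_cast hcard
        calc δ m * (Fs.card:ℝ) ≤ δ m * ((jmax:ℝ)+1) := by nlinarith [hδ_pos m]
        _ = ((jmax:ℝ)+1) * δ m := by ring
        _ ≤ p (q x) := hjc.le
    · rw [hfx, hsum]
      by_cases hall : Fs = Finset.univ
      · have hcard : Fs.card = m + 1 := by rw [hall]; simp
        rw [hcard]
        have hδL : δ m * (((m:ℕ):ℝ)+1) + δ m = L := by
          rw [hδ_def]
          field_simp
          ring
        calc p (q x) ≤ L := hfL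
        _ = δ m * (((m+1:ℕ):ℝ)) + δ m := by rw [← hδL]; push_cast; ring
      · set Gs := Finset.univ.filter
          (fun j : Fin (m+1) => ¬ (((j:ℝ)+1) * δ m < p (q x))) with hGs_def
        have hex : ∃ j, j ∉ Fs := by
          by_contra hcon
          push_neg at hcon
          exact hall (Finset.eq_univ_iff_forall.2 hcon)
        obtain ⟨j1, hj1⟩ := hex
        have hGs : Gs.Nonempty := by
          refine ⟨j1, Finset.mem_filter.2 ⟨Finset.mem_univ _, fun hc => hj1 ?_⟩⟩
          exact Finset.mem_filter.2 ⟨Finset.mem_univ _, hc⟩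
        have hj0_mem : Gs.min' hGs ∈ Gs := Gs.min'_mem hGs
        set j0 := Gs.min' hGs with hj0
        have hsub : Finset.Iio j0 ⊆ Fs := by
          intro j hj
          rw [Finset.mem_Iio] at hj
          by_contra hc
          have hjG : j ∈ Gs := by
            refine Finset.mem_filter.2 ⟨Finset.mem_univ _, fun hcc => hc ?_⟩
            exact Finset.mem_filter.2 ⟨Finset.mem_univ _, hcc⟩
          exact absurd (Gs.min'_le j hjG) (not_le.2 hj)
        have hcard : (j0 : ℕ) ≤ Fs.card := by
          have := Finset.card_le_card hsub
          rwa [Fin.card_Iio] at this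
        have hj0c : p (q x) ≤ ((j0:ℝ)+1) * δ m :=
          not_lt.1 (Finset.mem_filter.1 hj0_mem).2
        have hcast : ((j0:ℕ):ℝ) ≤ (Fs.card : ℝ) := by exact_mod_cast hcard
        calc p (q x) ≤ ((j0:ℝ)+1) * δ m := hj0c
        _ = (j0:ℝ) * δ m + δ m := by ring
        _ ≤ (Fs.card:ℝ) * δ m + δ m := by nlinarith [hδ_pos m]
        _ = δ m * (Fs.card:ℝ) + δ m := by ring
  have hδ0 : Filter.Tendsto (fun m : ℕ => δ m) Filter.atTop (nhds 0) := by
    rw [hδ_def]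
    refine Filter.Tendsto.div_atTop tendsto_const_nhds ?_
    exact Filter.tendsto_atTop_add_const_right _ 2 tendsto_natCast_atTop_atTop
  have hJ_tendsto : Filter.Tendsto (fun m => ∫ x, Φ m x) Filter.atTop (nhds 1) := by
    rw [← hf_prob]
    refine tendsto_integral_of_dominated_convergence f hΦ_meas hf_int ?_ ?_
    · intro m
      filter_upwards [hkey] with x hx
      rw [Real.norm_eq_abs, abs_of_nonneg (hΦ_nonneg m x)]
      exact (hx m).1
    · filter_upwards [hkey] with x hx
      refine tendsto_of_tendsto_of_tendsto_of_le_of_le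
        (g := fun m : ℕ => f x - δ m) (h := fun _ : ℕ => f x) ?_ tendsto_const_nhds ?_ ?_
      · simpa using tendsto_const_nhds.sub hδ0
      · intro m
        show f x - δ m ≤ Φ m x
        linarith [(hx m).2]
      · intro m
        show Φ m x ≤ f x
        exact (hx m).1
  obtain ⟨m, hm⟩ := (hJ_tendsto.eventually
    (eventually_gt_nhds (show 1 - ε/3 < 1 by linarith))).exists
  set J := ∫ x, Φ m x with hJ_def
  have hJle : J ≤ 1 := by
    rw [hJ_def, ← hf_prob]
    refine integral_mono_ae (hΦ_int m) hf_int ?_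
    filter_upwards [hkey] with x hx
    exact (hx m).1
  have hc0 : 0 < C.toReal := ENNReal.toReal_pos hC_pos.ne' hC_fin.ne
  have hR_pos : 0 < ∑ i : Fin (m+1), rr m i ^ d :=
    Finset.sum_pos (fun i _ => pow_pos (hrr_pos m i) d) Finset.univ_nonempty
  have hJ_eq : J = δ m * ((∑ i : Fin (m+1), rr m i ^ d) * C.toReal) := by
    rw [hJ_def, hΦ_integral m, ← Finset.sum_mul]
  have hJ_pos : 0 < J := by
    rw [hJ_eq]
    have := hδ_pos m
    positivity
  refine ⟨m+1, Nat.succ_le_succ (Nat.zero_le m), fun j => rr m j,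
    fun j => hrr_pos m j, ?_⟩
  have hset : ∀ j : Fin (m+1),
      {y : Fin d → ℝ | (y - μ) ⬝ᵥ A.mulVec (y - μ) < rr m j ^ 2} = E (sq m j) := by
    intro j
    ext y
    simp only [Set.mem_setOf_eq, hrr_sq m j]
    exact Iff.rfl
  simp only [hset]
  have hpt : ∀ x : Fin d → ℝ, (∑ j : Fin (m+1), (rr m j ^ d / ∑ i : Fin (m+1), rr m i ^ d) *
      ((volume (E (sq m j))).toReal⁻¹ * ((E (sq m j)).indicator (fun _ => (1:ℝ)) x)))
      = J⁻¹ * Φ m x := by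
    intro x
    rw [hΦ_def]
    simp only
    rw [← mul_assoc, Finset.mul_sum]
    refine Finset.sum_congr rfl (fun j _ => ?_)
    rw [hvol_toReal m j, ← mul_assoc]
    congr 1
    have h1 : (0:ℝ) < rr m j ^ d := pow_pos (hrr_pos m j) d
    rw [hJ_eq]
    have h2 : δ m ≠ 0 := (hδ_pos m).ne'
    field_simp
  simp only [hpt]
  have hbound : ∀ᵐ x : Fin d → ℝ, |J⁻¹ * Φ m x - f x|
      ≤ (J⁻¹ - 1) * Φ m x + (f x - Φ m x) := by
    filter_upwards [hkey] with x hx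
    have h1 : Φ m x ≤ f x := (hx m).1
    have h2 : 0 ≤ Φ m x := hΦ_nonneg m x
    have h3 : 1 ≤ J⁻¹ := by
      rw [le_inv_comm₀] <;> simp [hJ_pos, hJle]
    have : J⁻¹ * Φ m x - f x = (J⁻¹ - 1) * Φ m x + (Φ m x - f x) := by ring
    rw [this]
    refine (abs_add_le _ _).trans ?_
    rw [abs_of_nonneg (by nlinarith), abs_of_nonpos (by linarith)]
    ring_nf
    linarith
  have hint1 : Integrable (fun x => |J⁻¹ * Φ m x - f x|) :=
    (((hΦ_int m).const_mul J⁻¹).sub hf_int).abs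
  have hint2 : Integrable (fun x => (J⁻¹ - 1) * Φ m x + (f x - Φ m x)) :=
    ((hΦ_int m).const_mul _).add (hf_int.sub (hΦ_int m))
  have hle := integral_mono_ae hint1 hint2 hbound
  have hval : ∫ x, ((J⁻¹ - 1) * Φ m x + (f x - Φ m x)) = 2 * (1 - J) := by
    have ha : Integrable (fun x => (J⁻¹ - 1) * Φ m x) := (hΦ_int m).const_mul _
    have hb : Integrable (fun x => f x - Φ m x) := hf_int.sub (hΦ_int m)
    rw [integral_add ha hb, integral_const_mul, integral_sub hf_int (hΦ_int m),
      hf_prob, ← hJ_def]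
    field_simp
    ring
  rw [hval] at hle
  calc ∫ x, |J⁻¹ * Φ m x - f x| ≤ 2 * (1 - J) := hle
  _ < ε := by linarith [hm]
end
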